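/- arXiv:2506.21084 — 5 statements merged into one kernel-verified Lean document; each statement's English description precedes it below -/
import Mathlib

section
/- The von Neumann neighborhood N = {(0,1), (1,0), (0,−1), (−1,0)} does not admit a timed crossover gate: for all sizes M, N' ∈ ℕ⁺ and all delays T ∈ ℕ⁺, no timed crossover gate of size M × N' and delay T exists for this sandpile model. -/
/-! Sandpile models on ℤ² and timed crossover gates. -/

abbrev Cell : Type := ℤ × ℤ
abbrev Config : Type := Cell → ℕ

namespace Sandpile

/-- The threshold of a sandpile model is the cardinality of its neighborhood. -/
def θ (𝒩 : Finset Cell) : ℕ := 𝒩.card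

/-- The parallel sandpile dynamics: each cell reaching the threshold topples,
sending one grain to each of its out-neighbors. -/
def F (𝒩 : Finset Cell) (c : Config) : Config := fun p =>
  c p - θ 𝒩 * (if θ 𝒩 ≤ c p then 1 else 0)
    + ∑ p' ∈ 𝒩, (if θ 𝒩 ≤ c (p - p') then 1 else 0)

/-- The configuration with a single grain at cell `p`. -/
def one (p : Cell) : Config := fun q => if q = p then 1 else 0

/-- A configuration is stable when every cell is below the threshold. -/
def Stable (𝒩 : Finset Cell) (c : Config) : Prop := ∀ p, c p < θ 𝒩

/-- The rectangle {0,…,M−1} × {0,…,N'−1}. -/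
def Rect (M N' : ℕ) : Set Cell :=
  {p | 0 ≤ p.1 ∧ p.1 < (M : ℤ) ∧ 0 ≤ p.2 ∧ p.2 < (N' : ℤ)}

/-- The four corners of the rectangle. -/
def Corners (M N' : ℕ) : Set Cell :=
  {(0, 0), ((M : ℤ) - 1, 0), (0, (N' : ℤ) - 1), ((M : ℤ) - 1, (N' : ℤ) - 1)}

/-- The four sides of the rectangle. -/
def side (M N' : ℕ) (i : Fin 4) : Set Cell :=
  if i = 0 then {p | p.1 = 0 ∧ 0 ≤ p.2 ∧ p.2 < (N' : ℤ)}
  else if i = 1 then {p | p.2 = 0 ∧ 0 ≤ p.1 ∧ p.1 < (M : ℤ)}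
  else if i = 2 then {p | p.1 = (M : ℤ) - 1 ∧ 0 ≤ p.2 ∧ p.2 < (N' : ℤ)}
  else {p | p.2 = (N' : ℤ) - 1 ∧ 0 ≤ p.1 ∧ p.1 < (M : ℤ)}

/-- A timed crossover gate of size M × N' and delay T for the sandpile model 𝒩:
a stable configuration `g` supported on the rectangle, together with four
non-corner cells `n`, `e`, `s`, `w` on four pairwise different sides, `n, s`
(resp. `w, e`) on opposite sides, such that adding a grain at `n` (resp. `w`)
makes `s` (resp. `e`) reach the threshold at time exactly `T`, while no cell
on the two other sides reaches the threshold at any time `t ≤ T`. -/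
def IsTimedCrossoverGate (𝒩 : Finset Cell) (M N' T : ℕ)
    (g : Config) (n e s w : Cell) : Prop :=
  Stable 𝒩 g ∧
  (∀ p, p ∉ Rect M N' → g p = 0) ∧
  n ∈ Rect M N' ∧ e ∈ Rect M N' ∧ s ∈ Rect M N' ∧ w ∈ Rect M N' ∧
  n ∉ Corners M N' ∧ e ∉ Corners M N' ∧ s ∉ Corners M N' ∧ w ∉ Corners M N' ∧
  ∃ iN iE iS iW : Fin 4,
    n ∈ side M N' iN ∧ e ∈ side M N' iE ∧ s ∈ side M N' iS ∧ w ∈ side M N' iW ∧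
    ((iN : ℤ) - (iS : ℤ)).natAbs = 2 ∧
    ((iW : ℤ) - (iE : ℤ)).natAbs = 2 ∧
    ({iN, iE, iS, iW} : Finset (Fin 4)) = Finset.univ ∧
    θ 𝒩 ≤ (F 𝒩)^[T] (g + one n) s ∧
    (∀ p ∈ side M N' iW ∪ side M N' iE, ∀ t ≤ T, (F 𝒩)^[t] (g + one n) p < θ 𝒩) ∧
    θ 𝒩 ≤ (F 𝒩)^[T] (g + one w) e ∧
    (∀ p ∈ side M N' iN ∪ side M N' iS, ∀ t ≤ T, (F 𝒩)^[t] (g + one w) p < θ 𝒩)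

/-! ### Auxiliary development for the impossibility proof -/

namespace NoCross

/-- The von Neumann neighborhood. -/
abbrev nbhd : Finset Cell := {(0,1),(1,0),(0,-1),(-1,0)}

lemma theta_nbhd : θ nbhd = 4 := by decide

lemma mem_nbhd (v : Cell) : v ∈ nbhd ↔ v = (0,1) ∨ v = (1,0) ∨ v = (0,-1) ∨ v = (-1,0) := by
  simp [nbhd]

lemma nbhd_neg {v : Cell} (h : v ∈ nbhd) : -v ∈ nbhd := by
  rw [mem_nbhd] at h ⊢
  rcases h with h|h|h|h <;> subst h <;> simp [Prod.ext_iff]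

lemma step_cases {p q : Cell} (h : q - p ∈ nbhd) :
    (q.1 = p.1 ∧ q.2 = p.2 + 1) ∨ (q.1 = p.1 + 1 ∧ q.2 = p.2) ∨
    (q.1 = p.1 ∧ q.2 = p.2 - 1) ∨ (q.1 = p.1 - 1 ∧ q.2 = p.2) := by
  rw [mem_nbhd] at h
  rcases h with h|h|h|h <;>
  · rw [Prod.ext_iff] at h
    simp only [Prod.fst_sub, Prod.snd_sub] at h
    omega

/-- The state of the parallel dynamics at time `t`. -/
abbrev run (c : Config) (t : ℕ) : Config := (F nbhd)^[t] c

lemma run_succ (c : Config) (t : ℕ) (p : Cell) : run c (t+1) p = F nbhd (run c t) p := by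
  rw [run, Function.iterate_succ_apply']

/-- Number of topplings of cell `p` strictly before time `t`. -/
def U (c : Config) (t : ℕ) (p : Cell) : ℕ :=
  ∑ i ∈ Finset.range t, if 4 ≤ run c i p then 1 else 0

/-- Total number of grains received by `p` strictly before time `t`. -/
def recv (c : Config) (t : ℕ) (p : Cell) : ℕ := ∑ v ∈ nbhd, U c t (p - v)

lemma step_id (c : Config) (p : Cell) :
    F nbhd c p + 4 * (if 4 ≤ c p then 1 else 0)
      = c p + ∑ v ∈ nbhd, (if 4 ≤ c (p - v) then 1 else 0) := by
  simp only [F, theta_nbhd]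
  split_ifs with h <;> omega

/-- The odometer identity. -/
lemma odometer (c : Config) : ∀ t p, run c t p + 4 * U c t p = c p + recv c t p := by
  intro t
  induction t with
  | zero =>
    intro p
    simp only [U, recv, Finset.range_zero, Finset.sum_empty, Finset.sum_const_zero]
    rfl
  | succ t ih =>
    intro p
    have h2 := step_id (run c t) p
    have hU : ∀ q, U c (t+1) q = U c t q + (if 4 ≤ run c t q then 1 else 0) := by
      intro q; rw [U, U, Finset.sum_range_succ]
    have hsum : recv c (t+1) p = recv c t p + ∑ v ∈ nbhd, (if 4 ≤ run c t (p - v) then 1 else 0) := by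
      rw [recv, recv, ← Finset.sum_add_distrib]
      exact Finset.sum_congr rfl (fun v _ => hU _)
    rw [run_succ, hU, hsum]
    have h3 := ih p
    omega

lemma posU {c : Config} {t : ℕ} {p : Cell} (h : 0 < U c t p) : ∃ i < t, 4 ≤ run c i p := by
  by_contra hc
  push_neg at hc
  have : U c t p = 0 := Finset.sum_eq_zero (fun i hi => by
    rw [if_neg]
    have := hc i (Finset.mem_range.1 hi)
    omega)
  omega

lemma fireU {c : Config} {t : ℕ} {p : Cell} {i : ℕ} (hi : i < t) (h : 4 ≤ run c i p) :
    0 < U c t p := by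
  have h1 : (if 4 ≤ run c i p then 1 else 0) ≤ U c t p :=
    Finset.single_le_sum (f := fun i => if 4 ≤ run c i p then 1 else 0)
      (fun _ _ => Nat.zero_le _) (Finset.mem_range.2 hi)
  rw [if_pos h] at h1
  omega

lemma Ule1_of {c : Config} {t : ℕ} (h : ∀ i < t, ∀ q, 4 ≤ run c i q → U c i q = 0) :
    ∀ q, U c t q ≤ 1 := by
  induction t with
  | zero => intro q; simp [U]
  | succ t ih =>
    intro q
    have h1 := ih (fun i hi => h i (by omega)) q
    rw [U, Finset.sum_range_succ]
    split_ifs with hf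
    · have h2 := h t (by omega) q hf
      rw [U] at h2
      omega
    · rw [U] at h1; omega

lemma uniqueFire {c : Config} (hsf : ∀ t p, 4 ≤ run c t p → U c t p = 0) {u u' : ℕ} {p : Cell}
    (h : 4 ≤ run c u p) (h' : 4 ≤ run c u' p) : u = u' := by
  rcases lt_trichotomy u u' with hlt | he | hlt
  · have h1 := fireU hlt h; have h2 := hsf u' p h'; omega
  · exact he
  · have h1 := fireU hlt h'; have h2 := hsf u p h; omega

lemma all_pos_of_sum {f : Cell → ℕ} (h1 : ∀ v ∈ nbhd, f v ≤ 1) (h : 4 ≤ ∑ v ∈ nbhd, f v) :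
    ∀ v ∈ nbhd, 1 ≤ f v := by
  intro v hv
  by_contra hz
  have hfv : f v = 0 := by omega
  have he : ∑ v' ∈ nbhd, f v' = f v + ∑ v' ∈ nbhd.erase v, f v' :=
    (Finset.add_sum_erase nbhd f hv).symm
  have hle : ∑ v' ∈ nbhd.erase v, f v' ≤ ∑ v' ∈ nbhd.erase v, 1 :=
    Finset.sum_le_sum (fun v' hv' => h1 v' (Finset.mem_of_mem_erase hv'))
  have hcard : ∑ v' ∈ nbhd.erase v, (1:ℕ) = (nbhd.erase v).card := by simp
  have hc4 : (nbhd.erase v).card = 3 := by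
    rw [Finset.card_erase_of_mem hv]
    rfl
  omega

lemma sum_recv_le {c : Config} {t : ℕ} {p : Cell} (h1 : ∀ q, U c t q ≤ 1) : recv c t p ≤ 4 := by
  have : recv c t p ≤ ∑ _v ∈ nbhd, 1 := Finset.sum_le_sum (fun v _ => h1 _)
  simpa using this

/-- Key structural lemma: in the avalanche of a stable configuration supported on the
rectangle plus one grain at a cell `a` of the boundary with an outward neighbor,
each cell topples at most once, and only cells of the rectangle topple. -/
lemma confine (M N' : ℕ) (g : Config) (a : Cell)
    (hg : ∀ p, g p < 4) (hg0 : ∀ p, p ∉ Rect M N' → g p = 0)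
    (haR : a ∈ Rect M N') (hout : ∃ v ∈ nbhd, a - v ∉ Rect M N') :
    ∀ t p, 4 ≤ run (g + one a) t p → p ∈ Rect M N' ∧ U (g + one a) t p = 0 := by
  intro t
  induction t using Nat.strong_induction_on with
  | _ t ih =>
  intro p hf
  have hU1 : ∀ q, U (g + one a) t q ≤ 1 := Ule1_of (fun i hi q hq => (ih i hi q hq).2)
  have hod := odometer (g + one a) t p
  have hrecv4 : recv (g + one a) t p ≤ 4 := sum_recv_le hU1
  have hcP : (g + one a) p = g p + (if p = a then 1 else 0) := rfl
  have hallRect : 4 ≤ recv (g + one a) t p → ∀ v ∈ nbhd, p - v ∈ Rect M N' := by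
    intro h4 v hv
    have hpos := all_pos_of_sum (fun v' _ => hU1 _) (by rw [recv] at h4; exact h4) v hv
    obtain ⟨i, hi, hfi⟩ := posU hpos
    exact (ih i hi _ hfi).1
  have hUz : U (g + one a) t p = 0 := by
    by_contra h0
    have hU : 1 ≤ U (g + one a) t p := Nat.pos_of_ne_zero h0
    have hgp := hg p
    have hcp4 : (g + one a) p ≤ 4 := by rw [hcP]; split_ifs <;> omega
    have h4 : (g + one a) p = 4 ∧ recv (g + one a) t p = 4 := by omega
    have hpa : p = a := by
      by_contra hne
      rw [hcP, if_neg hne] at h4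
      omega
    obtain ⟨v0, hv0, hv0R⟩ := hout
    have := hallRect (by omega) v0 hv0
    rw [hpa] at this
    exact hv0R this
  refine ⟨?_, hUz⟩
  by_contra hpR
  have hpa : p ≠ a := fun h => hpR (h ▸ haR)
  have hcp0 : (g + one a) p = 0 := by rw [hcP, if_neg hpa, hg0 p hpR]
  have h4 : 4 ≤ recv (g + one a) t p := by omega
  have hall := hallRect h4
  have hd1 := hall (1,0) (by rw [mem_nbhd]; tauto)
  have hd2 := hall (-1,0) (by rw [mem_nbhd]; tauto)
  have hd3 := hall (0,1) (by rw [mem_nbhd]; tauto)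
  have hd4 := hall (0,-1) (by rw [mem_nbhd]; tauto)
  simp only [Rect, Set.mem_setOf_eq] at hd1 hd2 hd3 hd4 hpR
  simp only [Prod.fst_sub, Prod.snd_sub] at hd1 hd2 hd3 hd4
  norm_num at hd1 hd2 hd3 hd4
  omega

/-- The leak lemma: in the avalanche started at `w`, every cell `z` that topples at
time `u` either topples no later in the avalanche started at `n`, or is connected
to `w` by a supplier path all of whose cells avoid the set of "common cells where
the `n`-avalanche is not late". -/
lemma leak (g : Config) (n w : Cell)
    (hsfB : ∀ t p, 4 ≤ run (g + one w) t p → U (g + one w) t p = 0) :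
    ∀ u z, 4 ≤ run (g + one w) u z →
      (∃ t ≤ u, 4 ≤ run (g + one n) t z) ∨
      ∃ (k : ℕ) (f : ℕ → Cell), f 0 = w ∧ f k = z ∧ (∀ i < k, f (i+1) - f i ∈ nbhd) ∧
        (∀ i ≤ k, (∃ u' ≤ u, 4 ≤ run (g + one w) u' (f i)) ∧
          ¬ ∃ u' t', 4 ≤ run (g + one w) u' (f i) ∧ 4 ≤ run (g + one n) t' (f i) ∧ t' ≤ u') := by
  intro u
  induction u using Nat.strong_induction_on with
  | _ u ih =>
  intro z hz
  by_cases hQ : ∃ u' t', 4 ≤ run (g + one w) u' z ∧ 4 ≤ run (g + one n) t' z ∧ t' ≤ u'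
  · obtain ⟨u', t', hBu', hAt', htu⟩ := hQ
    have huu : u' = u := uniqueFire hsfB hBu' hz
    exact Or.inl ⟨t', by omega, hAt'⟩
  by_cases hzw : z = w
  · subst hzw
    exact Or.inr ⟨0, fun _ => z, rfl, rfl, fun i hi => absurd hi (by omega),
      fun i _ => ⟨⟨u, le_rfl, hz⟩, hQ⟩⟩
  · have hUz : U (g + one w) u z = 0 := hsfB u z hz
    have hcz : (g + one w) z = g z := by
      show g z + (if z = w then 1 else 0) = g z
      rw [if_neg hzw]
      omega
    have hod := odometer (g + one w) u z
    have hU1 : ∀ q, U (g + one w) u q ≤ 1 := Ule1_of (fun i _ q hq => hsfB i q hq)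
    set S := nbhd.filter (fun v => 0 < U (g + one w) u (z - v)) with hS
    have hsum_le : recv (g + one w) u z ≤ S.card := by
      rw [recv]
      calc ∑ v ∈ nbhd, U (g + one w) u (z - v)
          ≤ ∑ v ∈ nbhd, (if v ∈ S then 1 else 0) := by
            apply Finset.sum_le_sum
            intro v hv
            by_cases hvS : v ∈ S
            · rw [if_pos hvS]; exact hU1 _
            · rw [if_neg hvS]
              have : ¬ 0 < U (g + one w) u (z - v) := fun hpos => hvS (Finset.mem_filter.2 ⟨hv, hpos⟩)
              omega
        _ = S.card := by
            rw [Finset.sum_ite_mem]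
            rw [Finset.inter_eq_right.2 (Finset.filter_subset _ _)]
            simp
            rfl
    have hcard : 4 ≤ S.card + g z := by omega
    have hSfire : ∀ v ∈ S, ∃ u' < u, 4 ≤ run (g + one w) u' (z - v) :=
      fun v hv => posU (Finset.mem_filter.1 hv).2
    by_cases hex : ∀ v ∈ S, ∃ t' < u, 4 ≤ run (g + one n) t' (z - v)
    · left
      have hA1 : ∀ v ∈ S, 1 ≤ U (g + one n) u (z - v) := by
        intro v hv
        obtain ⟨t', ht', hft⟩ := hex v hv
        exact fireU ht' hft
      have hodA := odometer (g + one n) u z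
      have hrecvA : S.card ≤ recv (g + one n) u z := by
        rw [recv]
        calc (S.card : ℕ) = ∑ _v ∈ S, 1 := by simp
          _ ≤ ∑ v ∈ S, U (g + one n) u (z - v) := Finset.sum_le_sum hA1
          _ ≤ ∑ v ∈ nbhd, U (g + one n) u (z - v) :=
              Finset.sum_le_sum_of_subset (Finset.filter_subset _ _)
      have hgz : g z ≤ (g + one n) z := by
        show g z ≤ g z + (if z = n then 1 else 0)
        omega
      by_cases hUA : U (g + one n) u z = 0
      · exact ⟨u, le_rfl, by omega⟩
      · obtain ⟨i, hi, hfi⟩ := posU (Nat.pos_of_ne_zero hUA)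
        exact ⟨i, by omega, hfi⟩
    · push_neg at hex
      obtain ⟨v, hvS, hvb⟩ := hex
      obtain ⟨u', hu', hfv⟩ := hSfire v hvS
      rcases ih u' hu' (z - v) hfv with ⟨t, ht, hfA⟩ | ⟨k, f, hf0, hfk, hfstep, hfcell⟩
      · have := hvb t (by omega)
        omega
      · right
        refine ⟨k+1, fun i => if i ≤ k then f i else z, by simp [hf0], by simp, ?_, ?_⟩
        · intro i hi
          show (if i+1 ≤ k then f (i+1) else z) - (if i ≤ k then f i else z) ∈ nbhd
          by_cases hik : i < k
          · rw [if_pos (by omega : i+1 ≤ k), if_pos (by omega : i ≤ k)]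
            exact hfstep i hik
          · have hieq : i = k := by omega
            subst hieq
            rw [if_neg (by omega : ¬ i+1 ≤ i), if_pos (le_refl i), hfk, sub_sub_cancel]
            exact Finset.filter_subset _ _ hvS
        · intro i hi
          show (∃ u' ≤ u, 4 ≤ run (g + one w) u' (if i ≤ k then f i else z)) ∧
            ¬ ∃ u' t', 4 ≤ run (g + one w) u' (if i ≤ k then f i else z) ∧
              4 ≤ run (g + one n) t' (if i ≤ k then f i else z) ∧ t' ≤ u'
          by_cases hik : i ≤ k
          · rw [if_pos hik]
            obtain ⟨⟨u'', hu'', hB⟩, hnQ⟩ := hfcell i hik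
            exact ⟨⟨u'', by omega, hB⟩, hnQ⟩
          · rw [if_neg hik]
            exact ⟨⟨u, le_rfl, hz⟩, hQ⟩

/-! ### The discrete crossing lemma -/

/-- Number of horizontal edges of the path crossing the vertical line just left of
column `px`, strictly below row `py`. -/
def crossN (a : ℕ → Cell) (k : ℕ) (px py : ℤ) : ℕ :=
  ∑ i ∈ Finset.range k, if ((a i).2 < py ∧ (((a i).1 = px - 1 ∧ (a (i+1)).1 = px) ∨
      ((a i).1 = px ∧ (a (i+1)).1 = px - 1))) then 1 else 0

lemma sum_mod2_congr (f h : ℕ → ℕ) (k : ℕ) (hc : ∀ i < k, f i % 2 = h i % 2) :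
    (∑ i ∈ Finset.range k, f i) % 2 = (∑ i ∈ Finset.range k, h i) % 2 := by
  induction k with
  | zero => rfl
  | succ k ih =>
    rw [Finset.sum_range_succ, Finset.sum_range_succ]
    have h1 := ih (fun i hi => hc i (by omega))
    have h2 := hc k (by omega)
    omega

lemma sum_pair_parity (v : ℕ → ℕ) (k : ℕ) :
    (∑ i ∈ Finset.range k, (v i + v (i+1))) % 2 = (v 0 + v k) % 2 := by
  induction k with
  | zero => rw [Finset.range_zero, Finset.sum_empty]; omega
  | succ k ih =>
    rw [Finset.sum_range_succ]
    omega

lemma crossN_vert {a : ℕ → Cell} {k : ℕ} (hst : ∀ i < k, a (i+1) - a i ∈ nbhd)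
    {px py : ℤ} (hexcl : ∀ i ≤ k, ¬((a i).1 = px ∧ (a i).2 = py)) :
    crossN a k px py = crossN a k px (py+1) := by
  unfold crossN
  apply Finset.sum_congr rfl
  intro i hi
  rw [Finset.mem_range] at hi
  have hs := step_cases (hst i hi)
  have e1 := hexcl i (by omega)
  have e2 := hexcl (i+1) (by omega)
  rcases hs with ⟨hx,hy⟩|⟨hx,hy⟩|⟨hx,hy⟩|⟨hx,hy⟩ <;> split_ifs with h1 h2 <;> first | rfl | omega

lemma crossN_horiz {M : ℕ} {a : ℕ → Cell} {k : ℕ} (hst : ∀ i < k, a (i+1) - a i ∈ nbhd)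
    (ha0 : (a 0).1 = 0) (hak : (a k).1 = (M:ℤ) - 1)
    {px py : ℤ} (hpx1 : 1 ≤ px) (hpx2 : px ≤ (M:ℤ) - 2)
    (hexcl : ∀ i ≤ k, ¬((a i).1 = px ∧ (a i).2 = py)) :
    (crossN a k px py) % 2 = (crossN a k (px+1) py) % 2 := by
  have key : (crossN a k px py + crossN a k (px+1) py) % 2 = 0 := by
    have h1 : crossN a k px py + crossN a k (px+1) py
        = ∑ i ∈ Finset.range k,
          ((if ((a i).2 < py ∧ (((a i).1 = px - 1 ∧ (a (i+1)).1 = px) ∨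
              ((a i).1 = px ∧ (a (i+1)).1 = px - 1))) then 1 else 0)
           + (if ((a i).2 < py ∧ (((a i).1 = (px+1) - 1 ∧ (a (i+1)).1 = px+1) ∨
              ((a i).1 = px+1 ∧ (a (i+1)).1 = (px+1) - 1))) then 1 else 0)) := by
      rw [crossN, crossN, ← Finset.sum_add_distrib]
    rw [h1]
    have h2 : (∑ i ∈ Finset.range k,
          ((if ((a i).2 < py ∧ (((a i).1 = px - 1 ∧ (a (i+1)).1 = px) ∨
              ((a i).1 = px ∧ (a (i+1)).1 = px - 1))) then 1 else 0)
           + (if ((a i).2 < py ∧ (((a i).1 = (px+1) - 1 ∧ (a (i+1)).1 = px+1) ∨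
              ((a i).1 = px+1 ∧ (a (i+1)).1 = (px+1) - 1))) then 1 else 0))) % 2
        = (∑ i ∈ Finset.range k,
          ((if ((a i).1 = px ∧ (a i).2 < py) then 1 else 0)
           + (if ((a (i+1)).1 = px ∧ (a (i+1)).2 < py) then 1 else 0))) % 2 := by
      apply sum_mod2_congr
      intro i hi
      have hs := step_cases (hst i hi)
      have e1 := hexcl i (by omega)
      have e2 := hexcl (i+1) (by omega)
      rcases hs with ⟨hx,hy⟩|⟨hx,hy⟩|⟨hx,hy⟩|⟨hx,hy⟩ <;> split_ifs <;> omega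
    rw [h2]
    rw [sum_pair_parity (fun i => if ((a i).1 = px ∧ (a i).2 < py) then 1 else 0) k]
    rw [if_neg (by omega : ¬((a 0).1 = px ∧ (a 0).2 < py)),
        if_neg (by omega : ¬((a k).1 = px ∧ (a k).2 < py))]
  omega

lemma crossN_bot {a : ℕ → Cell} {k : ℕ} (hay : ∀ i ≤ k, 1 ≤ (a i).2) (px : ℤ) :
    crossN a k px 0 = 0 := by
  apply Finset.sum_eq_zero
  intro i hi
  rw [Finset.mem_range] at hi
  have := hay i (by omega)
  rw [if_neg]
  intro hcon
  omega

lemma crossN_top {M N' : ℕ} {a : ℕ → Cell} {k : ℕ} (hst : ∀ i < k, a (i+1) - a i ∈ nbhd)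
    (ha0 : (a 0).1 = 0) (hak : (a k).1 = (M:ℤ) - 1)
    (hay : ∀ i ≤ k, (a i).2 ≤ (N':ℤ) - 2)
    {px : ℤ} (hpx1 : 1 ≤ px) (hpx2 : px ≤ (M:ℤ) - 2) :
    (crossN a k px ((N':ℤ) - 1)) % 2 = 1 := by
  rw [crossN]
  have h2 : (∑ i ∈ Finset.range k, (if ((a i).2 < (N':ℤ) - 1 ∧ (((a i).1 = px - 1 ∧ (a (i+1)).1 = px) ∨
      ((a i).1 = px ∧ (a (i+1)).1 = px - 1))) then 1 else 0)) % 2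
      = (∑ i ∈ Finset.range k,
          ((if (px ≤ (a i).1) then 1 else 0) + (if (px ≤ (a (i+1)).1) then 1 else 0))) % 2 := by
    apply sum_mod2_congr
    intro i hi
    have hs := step_cases (hst i hi)
    have e1 := hay i (by omega)
    have e2 := hay (i+1) (by omega)
    rcases hs with ⟨hx,hy⟩|⟨hx,hy⟩|⟨hx,hy⟩|⟨hx,hy⟩ <;> split_ifs <;> omega
  rw [h2, sum_pair_parity (fun i => if (px ≤ (a i).1) then 1 else 0) k]
  rw [if_neg (by omega : ¬(px ≤ (a 0).1)), if_pos (by omega : px ≤ (a k).1)]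

lemma crossing_base {M N' : ℕ} {a b : ℕ → Cell} {k l : ℕ}
    (ha : ∀ i < k, a (i+1) - a i ∈ nbhd) (hb : ∀ j < l, b (j+1) - b j ∈ nbhd)
    (ha0 : (a 0).1 = 0) (hak : (a k).1 = (M:ℤ) - 1)
    (hay : ∀ i ≤ k, 1 ≤ (a i).2 ∧ (a i).2 ≤ (N':ℤ) - 2)
    (hbx : ∀ j ≤ l, 1 ≤ (b j).1 ∧ (b j).1 ≤ (M:ℤ) - 2)
    (hb0 : (b 0).2 = 0) (hbl : (b l).2 = (N':ℤ) - 1)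
    (hdisj : ∀ i ≤ k, ∀ j ≤ l, a i ≠ b j) : False := by
  have main : ∀ j, j ≤ l → (crossN a k (b j).1 (b j).2) % 2 = 0 := by
    intro j
    induction j with
    | zero =>
      intro _
      rw [hb0, crossN_bot (fun i hi => (hay i hi).1)]
    | succ j ihj =>
      intro hj1
      have hj : j ≤ l := by omega
      have ih := ihj hj
      have hs := step_cases (hb j (by omega))
      have hexP : ∀ i ≤ k, ¬((a i).1 = (b j).1 ∧ (a i).2 = (b j).2) := by
        intro i hik hcon
        exact hdisj i hik j hj (Prod.ext hcon.1 hcon.2)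
      have hexQ : ∀ i ≤ k, ¬((a i).1 = (b (j+1)).1 ∧ (a i).2 = (b (j+1)).2) := by
        intro i hik hcon
        exact hdisj i hik (j+1) hj1 (Prod.ext hcon.1 hcon.2)
      rcases hs with ⟨hx,hy⟩|⟨hx,hy⟩|⟨hx,hy⟩|⟨hx,hy⟩
      · rw [hx, hy, ← crossN_vert ha hexP]
        exact ih
      · rw [hx, hy, ← crossN_horiz ha ha0 hak (hbx j hj).1 (by have := hbx (j+1) hj1; omega) hexP]
        exact ih
      · have hexQ' : ∀ i ≤ k, ¬((a i).1 = (b j).1 ∧ (a i).2 = (b j).2 - 1) := by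
          intro i hik hcon
          apply hexQ i hik
          rw [hx, hy]; exact hcon
        have h2 := crossN_vert ha (px := (b j).1) (py := (b j).2 - 1) hexQ'
        rw [(by omega : (b j).2 - 1 + 1 = (b j).2)] at h2
        rw [hx, hy, h2]
        exact ih
      · have hexQ' : ∀ i ≤ k, ¬((a i).1 = (b j).1 - 1 ∧ (a i).2 = (b j).2) := by
          intro i hik hcon
          apply hexQ i hik
          rw [hx, hy]; exact hcon
        have h2 := crossN_horiz (M := M) ha ha0 hak (px := (b j).1 - 1) (py := (b j).2)
          (by have := hbx (j+1) hj1; omega) (by have := hbx j hj; omega) hexQ'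
        rw [(by omega : (b j).1 - 1 + 1 = (b j).1)] at h2
        rw [hx, hy]
        omega
  have hfin := main l le_rfl
  have htop := crossN_top ha ha0 hak (fun i hi => (hay i hi).2) (hbx l le_rfl).1 (hbx l le_rfl).2
  rw [hbl] at hfin
  omega

lemma crossing' {M N' : ℕ} {a b : ℕ → Cell} {k l : ℕ}
    (ha : ∀ i < k, a (i+1) - a i ∈ nbhd) (hb : ∀ j < l, b (j+1) - b j ∈ nbhd)
    (hax : ((a 0).1 = 0 ∧ (a k).1 = (M:ℤ)-1) ∨ ((a 0).1 = (M:ℤ)-1 ∧ (a k).1 = 0))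
    (hay : ∀ i ≤ k, 1 ≤ (a i).2 ∧ (a i).2 ≤ (N':ℤ) - 2)
    (hbx : ∀ j ≤ l, 1 ≤ (b j).1 ∧ (b j).1 ≤ (M:ℤ) - 2)
    (hby : ((b 0).2 = 0 ∧ (b l).2 = (N':ℤ)-1) ∨ ((b 0).2 = (N':ℤ)-1 ∧ (b l).2 = 0))
    (hdisj : ∀ i ≤ k, ∀ j ≤ l, a i ≠ b j) : False := by
  have harev : ∀ i < k, (fun i => a (k - i)) (i+1) - (fun i => a (k - i)) i ∈ nbhd := by
    intro i hi
    have h1 : (k - (i+1)) + 1 = k - i := by omega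
    have := ha (k - (i+1)) (by omega)
    rw [h1] at this
    have h2 := nbhd_neg this
    rw [neg_sub] at h2
    exact h2
  have hbrev : ∀ j < l, (fun j => b (l - j)) (j+1) - (fun j => b (l - j)) j ∈ nbhd := by
    intro j hj
    have h1 : (l - (j+1)) + 1 = l - j := by omega
    have := hb (l - (j+1)) (by omega)
    rw [h1] at this
    have h2 := nbhd_neg this
    rw [neg_sub] at h2
    exact h2
  rcases hax with ⟨hx1, hx2⟩ | ⟨hx1, hx2⟩ <;> rcases hby with ⟨hy1, hy2⟩ | ⟨hy1, hy2⟩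
  · exact crossing_base ha hb hx1 hx2 hay hbx hy1 hy2 hdisj
  · exact crossing_base ha hbrev hx1 hx2 hay
      (fun j hj => hbx (l - j) (by omega))
      (by simpa using hy2) (by simpa using hy1)
      (fun i hi j hj => hdisj i hi (l - j) (by omega))
  · exact crossing_base harev hb (by simpa using hx2) (by simpa using hx1)
      (fun i hi => hay (k - i) (by omega)) hbx hy1 hy2
      (fun i hi j hj => hdisj (k - i) (by omega) j hj)
  · exact crossing_base harev hbrev (by simpa using hx2) (by simpa using hx1)
      (fun i hi => hay (k - i) (by omega))
      (fun j hj => hbx (l - j) (by omega))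
      (by simpa using hy2) (by simpa using hy1)
      (fun i hi j hj => hdisj (k - i) (by omega) (l - j) (by omega))

/-! ### The core impossibility argument, in normalized coordinates -/

lemma semifinal (M N' T : ℕ) (g : Config) (n s w e : Cell)
    (hg : ∀ p, g p < 4) (hg0 : ∀ p, p ∉ Rect M N' → g p = 0)
    (hnR : n ∈ Rect M N') (hwR : w ∈ Rect M N')
    (hns : (n.2 = 0 ∧ s.2 = (N':ℤ)-1) ∨ (n.2 = (N':ℤ)-1 ∧ s.2 = 0))
    (hsx : 1 ≤ s.1 ∧ s.1 ≤ (M:ℤ)-2)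
    (hwe : (w.1 = 0 ∧ e.1 = (M:ℤ)-1) ∨ (w.1 = (M:ℤ)-1 ∧ e.1 = 0))
    (hey : 1 ≤ e.2 ∧ e.2 ≤ (N':ℤ)-2)
    (hAs : 4 ≤ run (g + one n) T s)
    (hAq : ∀ p : Cell, (p.1 = 0 ∨ p.1 = (M:ℤ)-1) → 0 ≤ p.2 → p.2 < (N':ℤ) → ∀ t ≤ T,
      run (g + one n) t p < 4)
    (hBe : 4 ≤ run (g + one w) T e)
    (hBq : ∀ p : Cell, (p.2 = 0 ∨ p.2 = (N':ℤ)-1) → 0 ≤ p.1 → p.1 < (M:ℤ) → ∀ t ≤ T,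
      run (g + one w) t p < 4) : False := by
  have hnRc : 0 ≤ n.1 ∧ n.1 < (M:ℤ) ∧ 0 ≤ n.2 ∧ n.2 < (N':ℤ) := hnR
  have hwRc : 0 ≤ w.1 ∧ w.1 < (M:ℤ) ∧ 0 ≤ w.2 ∧ w.2 < (N':ℤ) := hwR
  have houtn : ∃ v ∈ nbhd, n - v ∉ Rect M N' := by
    rcases hns with ⟨h, _⟩ | ⟨h, _⟩
    · refine ⟨(0,1), by rw [mem_nbhd]; tauto, ?_⟩
      intro hmem
      have hc : 0 ≤ (n - ((0:ℤ),(1:ℤ))).2 := hmem.2.2.1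
      rw [Prod.snd_sub] at hc
      norm_num at hc
      omega
    · refine ⟨(0,-1), by rw [mem_nbhd]; tauto, ?_⟩
      intro hmem
      have hc : (n - ((0:ℤ),(-1:ℤ))).2 < (N':ℤ) := hmem.2.2.2
      rw [Prod.snd_sub] at hc
      norm_num at hc
      omega
  have houtw : ∃ v ∈ nbhd, w - v ∉ Rect M N' := by
    rcases hwe with ⟨h, _⟩ | ⟨h, _⟩
    · refine ⟨(1,0), by rw [mem_nbhd]; tauto, ?_⟩
      intro hmem
      have hc : 0 ≤ (w - ((1:ℤ),(0:ℤ))).1 := hmem.1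
      rw [Prod.fst_sub] at hc
      norm_num at hc
      omega
    · refine ⟨(-1,0), by rw [mem_nbhd]; tauto, ?_⟩
      intro hmem
      have hc : (w - ((-1:ℤ),(0:ℤ))).1 < (M:ℤ) := hmem.2.1
      rw [Prod.fst_sub] at hc
      norm_num at hc
      omega
  have SFA := confine M N' g n hg hg0 hnR houtn
  have SFB := confine M N' g w hg hg0 hwR houtw
  have hsfA : ∀ t p, 4 ≤ run (g + one n) t p → U (g + one n) t p = 0 := fun t p h => (SFA t p h).2
  have hsfB : ∀ t p, 4 ≤ run (g + one w) t p → U (g + one w) t p = 0 := fun t p h => (SFB t p h).2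
  -- leak towards e in the n-avalanche
  rcases leak g n w hsfB T e hBe with ⟨t, ht, hfA⟩ | ⟨kB, fB, hB0, hBk, hBstep, hBcell⟩
  · have he01 : e.1 = 0 ∨ e.1 = (M:ℤ)-1 := by
      rcases hwe with ⟨_, h⟩ | ⟨_, h⟩
      exacts [Or.inr h, Or.inl h]
    have hq := hAq e he01 (by omega) (by omega) t ht
    omega
  rcases leak g w n hsfA T s hAs with ⟨t, ht, hfB⟩ | ⟨kA, fA, hA0, hAk, hAstep, hAcell⟩
  · have hs01 : s.2 = 0 ∨ s.2 = (N':ℤ)-1 := by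
      rcases hns with ⟨_, h⟩ | ⟨_, h⟩
      exacts [Or.inr h, Or.inl h]
    have hq := hBq s hs01 (by omega) (by omega) t ht
    omega
  -- coordinates of the path cells
  have hBcoord : ∀ i ≤ kB, (0 ≤ (fB i).1 ∧ (fB i).1 ≤ (M:ℤ)-1) ∧
      (1 ≤ (fB i).2 ∧ (fB i).2 ≤ (N':ℤ)-2) := by
    intro i hi
    obtain ⟨⟨u, hu, hfire⟩, _⟩ := hBcell i hi
    have hRc : 0 ≤ (fB i).1 ∧ (fB i).1 < (M:ℤ) ∧ 0 ≤ (fB i).2 ∧ (fB i).2 < (N':ℤ) :=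
      (SFB u _ hfire).1
    have h1 : (fB i).2 ≠ 0 := by
      intro h
      have := hBq (fB i) (Or.inl h) hRc.1 hRc.2.1 u hu
      omega
    have h2 : (fB i).2 ≠ (N':ℤ)-1 := by
      intro h
      have := hBq (fB i) (Or.inr h) hRc.1 hRc.2.1 u hu
      omega
    refine ⟨⟨hRc.1, by omega⟩, by omega, by omega⟩
  have hAcoord : ∀ j ≤ kA, (1 ≤ (fA j).1 ∧ (fA j).1 ≤ (M:ℤ)-2) ∧
      (0 ≤ (fA j).2 ∧ (fA j).2 ≤ (N':ℤ)-1) := by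
    intro j hj
    obtain ⟨⟨u, hu, hfire⟩, _⟩ := hAcell j hj
    have hRc : 0 ≤ (fA j).1 ∧ (fA j).1 < (M:ℤ) ∧ 0 ≤ (fA j).2 ∧ (fA j).2 < (N':ℤ) :=
      (SFA u _ hfire).1
    have h1 : (fA j).1 ≠ 0 := by
      intro h
      have := hAq (fA j) (Or.inl h) hRc.2.2.1 hRc.2.2.2 u hu
      omega
    have h2 : (fA j).1 ≠ (M:ℤ)-1 := by
      intro h
      have := hAq (fA j) (Or.inr h) hRc.2.2.1 hRc.2.2.2 u hu
      omega
    refine ⟨⟨by omega, by omega⟩, hRc.2.2.1, by omega⟩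
  -- disjointness of the two paths
  have hdisj : ∀ i ≤ kB, ∀ j ≤ kA, fB i ≠ fA j := by
    intro i hi j hj heq
    obtain ⟨⟨u, hu, hfiB⟩, hnQB⟩ := hBcell i hi
    obtain ⟨⟨t, ht, hfiA⟩, hnQA⟩ := hAcell j hj
    rw [heq] at hfiB hnQB
    rcases le_total t u with h | h
    · exact hnQB ⟨u, t, hfiB, hfiA, h⟩
    · exact hnQA ⟨t, u, hfiA, hfiB, h⟩
  -- the crossing lemma yields the contradiction
  refine crossing' (M := M) (N' := N') hBstep hAstep ?_ ?_ ?_ ?_ hdisj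
  · rw [hB0, hBk]
    exact hwe
  · intro i hi
    exact (hBcoord i hi).2
  · intro j hj
    exact (hAcoord j hj).1
  · rw [hA0, hAk]
    exact hns

lemma side_mem (M N' : ℕ) (q : Cell) (i : Fin 4) :
    q ∈ side M N' i ↔
      ((i.val = 0 ∧ (q.1 = 0 ∧ 0 ≤ q.2 ∧ q.2 < (N':ℤ))) ∨
       (i.val = 1 ∧ (q.2 = 0 ∧ 0 ≤ q.1 ∧ q.1 < (M:ℤ))) ∨
       (i.val = 2 ∧ (q.1 = (M:ℤ)-1 ∧ 0 ≤ q.2 ∧ q.2 < (N':ℤ))) ∨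
       (i.val = 3 ∧ (q.2 = (N':ℤ)-1 ∧ 0 ≤ q.1 ∧ q.1 < (M:ℤ)))) := by
  fin_cases i <;> simp [side, Set.mem_setOf_eq]

lemma corner_facts (M N' : ℕ) (q : Cell) (hq : q ∉ Corners M N') :
    (¬(q.1 = 0 ∧ q.2 = 0)) ∧ (¬(q.1 = (M:ℤ)-1 ∧ q.2 = 0)) ∧
    (¬(q.1 = 0 ∧ q.2 = (N':ℤ)-1)) ∧ (¬(q.1 = (M:ℤ)-1 ∧ q.2 = (N':ℤ)-1)) := by
  simp only [Corners, Set.mem_insert_iff, Set.mem_singleton_iff, Prod.ext_iff, not_or] at hq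
  exact hq

lemma side_of0 (M N' : ℕ) {q : Cell} {i : Fin 4} (hv : i.val = 0) (hq : q ∈ side M N' i) :
    q.1 = 0 ∧ 0 ≤ q.2 ∧ q.2 < (N':ℤ) := by
  rw [side_mem] at hq
  rcases hq with ⟨h0,hc⟩|⟨h0,hc⟩|⟨h0,hc⟩|⟨h0,hc⟩
  exacts [hc, absurd hv (by omega), absurd hv (by omega), absurd hv (by omega)]

lemma side_of1 (M N' : ℕ) {q : Cell} {i : Fin 4} (hv : i.val = 1) (hq : q ∈ side M N' i) :
    q.2 = 0 ∧ 0 ≤ q.1 ∧ q.1 < (M:ℤ) := by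
  rw [side_mem] at hq
  rcases hq with ⟨h0,hc⟩|⟨h0,hc⟩|⟨h0,hc⟩|⟨h0,hc⟩
  exacts [absurd hv (by omega), hc, absurd hv (by omega), absurd hv (by omega)]

lemma side_of2 (M N' : ℕ) {q : Cell} {i : Fin 4} (hv : i.val = 2) (hq : q ∈ side M N' i) :
    q.1 = (M:ℤ)-1 ∧ 0 ≤ q.2 ∧ q.2 < (N':ℤ) := by
  rw [side_mem] at hq
  rcases hq with ⟨h0,hc⟩|⟨h0,hc⟩|⟨h0,hc⟩|⟨h0,hc⟩
  exacts [absurd hv (by omega), absurd hv (by omega), hc, absurd hv (by omega)]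

lemma side_of3 (M N' : ℕ) {q : Cell} {i : Fin 4} (hv : i.val = 3) (hq : q ∈ side M N' i) :
    q.2 = (N':ℤ)-1 ∧ 0 ≤ q.1 ∧ q.1 < (M:ℤ) := by
  rw [side_mem] at hq
  rcases hq with ⟨h0,hc⟩|⟨h0,hc⟩|⟨h0,hc⟩|⟨h0,hc⟩
  exacts [absurd hv (by omega), absurd hv (by omega), absurd hv (by omega), hc]

lemma rowPair (M N' : ℕ) (n s : Cell) (iN iS : Fin 4)
    (hn : n ∈ side M N' iN) (hs : s ∈ side M N' iS)
    (hnC : n ∉ Corners M N') (hsC : s ∉ Corners M N')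
    (hNSr : iN.val = 1 ∧ iS.val = 3 ∨ iN.val = 3 ∧ iS.val = 1) :
    ((n.2 = 0 ∧ s.2 = (N':ℤ)-1) ∨ (n.2 = (N':ℤ)-1 ∧ s.2 = 0)) ∧
      (1 ≤ s.1 ∧ s.1 ≤ (M:ℤ)-2) ∧ (1 ≤ n.1 ∧ n.1 ≤ (M:ℤ)-2) := by
  have h1 := corner_facts M N' n hnC
  have h2 := corner_facts M N' s hsC
  rcases hNSr with ⟨hiN, hiS⟩ | ⟨hiN, hiS⟩
  · have hn' := side_of1 M N' hiN hn
    have hs' := side_of3 M N' hiS hs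
    refine ⟨Or.inl ⟨hn'.1, hs'.1⟩, ⟨?_, ?_⟩, ⟨?_, ?_⟩⟩ <;> omega
  · have hn' := side_of3 M N' hiN hn
    have hs' := side_of1 M N' hiS hs
    refine ⟨Or.inr ⟨hn'.1, hs'.1⟩, ⟨?_, ?_⟩, ⟨?_, ?_⟩⟩ <;> omega

lemma colPair (M N' : ℕ) (w e : Cell) (iW iE : Fin 4)
    (hw : w ∈ side M N' iW) (he : e ∈ side M N' iE)
    (hwC : w ∉ Corners M N') (heC : e ∉ Corners M N')
    (hWEr : iW.val = 0 ∧ iE.val = 2 ∨ iW.val = 2 ∧ iE.val = 0) :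
    ((w.1 = 0 ∧ e.1 = (M:ℤ)-1) ∨ (w.1 = (M:ℤ)-1 ∧ e.1 = 0)) ∧
      (1 ≤ e.2 ∧ e.2 ≤ (N':ℤ)-2) ∧ (1 ≤ w.2 ∧ w.2 ≤ (N':ℤ)-2) := by
  have h1 := corner_facts M N' w hwC
  have h2 := corner_facts M N' e heC
  rcases hWEr with ⟨hiW, hiE⟩ | ⟨hiW, hiE⟩
  · have hw' := side_of0 M N' hiW hw
    have he' := side_of2 M N' hiE he
    refine ⟨Or.inl ⟨hw'.1, he'.1⟩, ⟨?_, ?_⟩, ⟨?_, ?_⟩⟩ <;> omega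
  · have hw' := side_of2 M N' hiW hw
    have he' := side_of0 M N' hiE he
    refine ⟨Or.inr ⟨hw'.1, he'.1⟩, ⟨?_, ?_⟩, ⟨?_, ?_⟩⟩ <;> omega

/-- membership in the union of a pair of opposite column sides -/
lemma mem_col_union (M N' : ℕ) (p : Cell) (i j : Fin 4)
    (hij : i.val = 0 ∧ j.val = 2 ∨ i.val = 2 ∧ j.val = 0)
    (hp : p.1 = 0 ∨ p.1 = (M:ℤ)-1) (hy1 : 0 ≤ p.2) (hy2 : p.2 < (N':ℤ)) :
    p ∈ side M N' i ∪ side M N' j := by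
  rcases hij with ⟨hi, hj⟩ | ⟨hi, hj⟩ <;> rcases hp with h | h
  · exact Or.inl ((side_mem M N' p i).mpr (by omega))
  · exact Or.inr ((side_mem M N' p j).mpr (by omega))
  · exact Or.inr ((side_mem M N' p j).mpr (by omega))
  · exact Or.inl ((side_mem M N' p i).mpr (by omega))

/-- membership in the union of a pair of opposite row sides -/
lemma mem_row_union (M N' : ℕ) (p : Cell) (i j : Fin 4)
    (hij : i.val = 1 ∧ j.val = 3 ∨ i.val = 3 ∧ j.val = 1)
    (hp : p.2 = 0 ∨ p.2 = (N':ℤ)-1) (hy1 : 0 ≤ p.1) (hy2 : p.1 < (M:ℤ)) :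
    p ∈ side M N' i ∪ side M N' j := by
  rcases hij with ⟨hi, hj⟩ | ⟨hi, hj⟩ <;> rcases hp with h | h
  · exact Or.inl ((side_mem M N' p i).mpr (by omega))
  · exact Or.inr ((side_mem M N' p j).mpr (by omega))
  · exact Or.inr ((side_mem M N' p j).mpr (by omega))
  · exact Or.inl ((side_mem M N' p i).mpr (by omega))

lemma orient (iN iE iS iW : Fin 4)
    (hNS : ((iN : ℤ) - (iS : ℤ)).natAbs = 2)
    (hWE : ((iW : ℤ) - (iE : ℤ)).natAbs = 2)
    (huniv : ({iN, iE, iS, iW} : Finset (Fin 4)) = Finset.univ) :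
    ((iN.val = 1 ∧ iS.val = 3 ∨ iN.val = 3 ∧ iS.val = 1) ∧
     (iW.val = 0 ∧ iE.val = 2 ∨ iW.val = 2 ∧ iE.val = 0)) ∨
    ((iN.val = 0 ∧ iS.val = 2 ∨ iN.val = 2 ∧ iS.val = 0) ∧
     (iW.val = 1 ∧ iE.val = 3 ∨ iW.val = 3 ∧ iE.val = 1)) := by
  have hmem : ∀ x : Fin 4, x = iN ∨ x = iE ∨ x = iS ∨ x = iW := by
    intro x
    have : x ∈ ({iN, iE, iS, iW} : Finset (Fin 4)) := huniv ▸ Finset.mem_univ x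
    simpa [Finset.mem_insert] using this
  have h0 := hmem 0
  have h1 := hmem 1
  have h2 := hmem 2
  have h3 := hmem 3
  simp only [Fin.ext_iff] at h0 h1 h2 h3
  have e0 : (0 : Fin 4).val = 0 := rfl
  have e1 : (1 : Fin 4).val = 1 := rfl
  have e2 : (2 : Fin 4).val = 2 := rfl
  have e3 : (3 : Fin 4).val = 3 := rfl
  rw [e0] at h0; rw [e1] at h1; rw [e2] at h2; rw [e3] at h3
  have cNS : ((iN.val : ℤ) - (iS.val : ℤ)).natAbs = 2 := hNS
  have cWE : ((iW.val : ℤ) - (iE.val : ℤ)).natAbs = 2 := hWE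
  have hlt1 := iN.isLt
  have hlt2 := iE.isLt
  have hlt3 := iS.isLt
  have hlt4 := iW.isLt
  omega

end NoCross

theorem vonNeumann_no_timed_crossover :
    ∀ M N' T : ℕ, 0 < M → 0 < N' → 0 < T →
      ¬ ∃ g n e s w, IsTimedCrossoverGate
        ({(0,1),(1,0),(0,-1),(-1,0)} : Finset Cell) M N' T g n e s w := by
  intro M N' T hM hN hT
  rintro ⟨g, n, e, s, w, hstab, hsupp, hnR, heR, hsR, hwR, hnC, heC, hsC, hwC,
          iN, iE, iS, iW, hn, he, hs, hw, hNS, hWE, huniv, hAs, hAq, hBe, hBq⟩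
  -- the model is the von Neumann neighborhood
  have hg : ∀ p, g p < 4 := by
    intro p
    have := hstab p
    rwa [NoCross.theta_nbhd] at this
  rw [NoCross.theta_nbhd] at hAs hBe
  -- determine the orientation of the four sides
  have hcases := NoCross.orient iN iE iS iW hNS hWE huniv
  rcases hcases with ⟨hNSr, hWEr⟩ | ⟨hNSr, hWEr⟩
  · -- n, s on the horizontal (row) sides, w, e on the vertical (column) sides
    obtain ⟨hnsO, hsx, hnx⟩ := NoCross.rowPair M N' n s iN iS hn hs hnC hsC hNSr
    obtain ⟨hweO, hey, hwy⟩ := NoCross.colPair M N' w e iW iE hw he hwC heC hWEr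
    have hAquiet : ∀ p : Cell, (p.1 = 0 ∨ p.1 = (M:ℤ)-1) → 0 ≤ p.2 → p.2 < (N':ℤ) →
        ∀ t ≤ T, NoCross.run (g + one n) t p < 4 := by
      intro p hp hy1 hy2 t ht
      have hm := NoCross.mem_col_union M N' p iW iE hWEr hp hy1 hy2
      have := hAq p hm t ht
      rwa [NoCross.theta_nbhd] at this
    have hBquiet : ∀ p : Cell, (p.2 = 0 ∨ p.2 = (N':ℤ)-1) → 0 ≤ p.1 → p.1 < (M:ℤ) →
        ∀ t ≤ T, NoCross.run (g + one w) t p < 4 := by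
      intro p hp hy1 hy2 t ht
      have hm := NoCross.mem_row_union M N' p iN iS hNSr hp hy1 hy2
      have := hBq p hm t ht
      rwa [NoCross.theta_nbhd] at this
    exact NoCross.semifinal M N' T g n s w e hg hsupp hnR hwR hnsO hsx hweO hey
      hAs hAquiet hBe hBquiet
  · -- n, s on the vertical (column) sides, w, e on the horizontal (row) sides
    obtain ⟨hweO, hey, hwy⟩ := NoCross.rowPair M N' w e iW iE hw he hwC heC hWEr
    obtain ⟨hnsO, hsx, hnx⟩ := NoCross.colPair M N' n s iN iS hn hs hnC hsC hNSr
    have hAquiet : ∀ p : Cell, (p.1 = 0 ∨ p.1 = (M:ℤ)-1) → 0 ≤ p.2 → p.2 < (N':ℤ) →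
        ∀ t ≤ T, NoCross.run (g + one w) t p < 4 := by
      intro p hp hy1 hy2 t ht
      have hm := NoCross.mem_col_union M N' p iN iS hNSr hp hy1 hy2
      have := hBq p hm t ht
      rwa [NoCross.theta_nbhd] at this
    have hBquiet : ∀ p : Cell, (p.2 = 0 ∨ p.2 = (N':ℤ)-1) → 0 ≤ p.1 → p.1 < (M:ℤ) →
        ∀ t ≤ T, NoCross.run (g + one n) t p < 4 := by
      intro p hp hy1 hy2 t ht
      have hm := NoCross.mem_row_union M N' p iW iE hWEr hp hy1 hy2
      have := hAq p hm t ht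
      rwa [NoCross.theta_nbhd] at this
    exact NoCross.semifinal M N' T g w e n s hg hsupp hwR hnR hweO hey hnsO hsx
      hBe hAquiet hAs hBquiet

end Sandpile
end

section
/- The neighborhood N = {(0,1), (1,0)} (neighborhood 192 in the 8-bit numbering of subsets of the Moore neighborhood) does not admit a timed crossover gate: for all sizes M, N' ∈ ℕ⁺ and all delays T ∈ ℕ⁺, no timed crossover gate of size M × N' and delay T exists for this sandpile model. -/
namespace Sandpile

namespace N192

def NN : Finset Cell := {(0,1),(1,0)}

lemma theta_NN : θ NN = 2 := by decide

lemma F_eq (c : Config) (p : Cell) :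
    F NN c p = c p - 2 * (if 2 ≤ c p then 1 else 0)
      + ((if 2 ≤ c (p - (0,1)) then 1 else 0) + (if 2 ≤ c (p - (1,0)) then 1 else 0)) := by
  simp only [F, theta_NN]
  rw [show (NN : Finset Cell) = {(0,1),(1,0)} from rfl, Finset.sum_pair (by decide)]

def lvl (x₀ p : Cell) : ℤ := p.1 + p.2 - x₀.1 - x₀.2

def R (g : Config) (x₀ : Cell) : ℕ → Cell → ℕ
  | 0, p => if p = x₀ then 1 else 0
  | δ+1, p => if lvl x₀ p = (δ : ℤ)+1 ∧
      2 ≤ g p + R g x₀ δ (p - (0,1)) + R g x₀ δ (p - (1,0)) then 1 else 0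

lemma R_zero_def (g : Config) (x₀ p : Cell) :
    R g x₀ 0 p = if p = x₀ then 1 else 0 := rfl

lemma R_succ_def (g : Config) (x₀ : Cell) (δ : ℕ) (p : Cell) :
    R g x₀ (δ+1) p = if (lvl x₀ p = (δ : ℤ)+1 ∧
      2 ≤ g p + R g x₀ δ (p - (0,1)) + R g x₀ δ (p - (1,0))) then 1 else 0 := rfl

lemma R_le_one (g : Config) (x₀ : Cell) (δ : ℕ) (p : Cell) : R g x₀ δ p ≤ 1 := by
  cases δ with
  | zero => rw [R_zero_def]; split <;> simp
  | succ δ => rw [R_succ_def]; split <;> simp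

lemma R_zero_iff (g : Config) (x₀ p : Cell) : R g x₀ 0 p = 1 ↔ p = x₀ := by
  rw [R_zero_def]; split <;> simp_all

lemma R_succ_iff (g : Config) (x₀ : Cell) (δ : ℕ) (p : Cell) :
    R g x₀ (δ+1) p = 1 ↔ (lvl x₀ p = (δ : ℤ)+1 ∧
      2 ≤ g p + R g x₀ δ (p - (0,1)) + R g x₀ δ (p - (1,0))) := by
  rw [R_succ_def]; split <;> simp_all

lemma lvl_sub01 (x₀ p : Cell) : lvl x₀ (p - (0,1)) = lvl x₀ p - 1 := by
  simp [lvl]; ring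

lemma lvl_sub10 (x₀ p : Cell) : lvl x₀ (p - (1,0)) = lvl x₀ p - 1 := by
  simp [lvl]; ring

lemma R_lvl {g : Config} {x₀ : Cell} {δ : ℕ} {p : Cell} (h : R g x₀ δ p = 1) :
    lvl x₀ p = (δ : ℤ) := by
  cases δ with
  | zero => rw [R_zero_iff] at h; subst h; unfold lvl; push_cast; ring
  | succ δ => rw [R_succ_iff] at h; push_cast; exact h.1

lemma R_of_lvl_ne {g : Config} {x₀ : Cell} {δ : ℕ} {p : Cell} (h : lvl x₀ p ≠ (δ : ℤ)) :
    R g x₀ δ p = 0 := by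
  by_contra hne
  have h1 := R_le_one g x₀ δ p
  have h2 : R g x₀ δ p = 1 := by omega
  exact h (R_lvl h2)

lemma sub01 (p : Cell) : p - ((0:ℤ),(1:ℤ)) = (p.1, p.2 - 1) := by
  ext <;> simp

lemma sub10 (p : Cell) : p - ((1:ℤ),(0:ℤ)) = (p.1 - 1, p.2) := by
  ext <;> simp

lemma R_ge {g : Config} (hg : ∀ q, g q ≤ 1) {x₀ : Cell} : ∀ {δ : ℕ} {p : Cell},
    R g x₀ δ p = 1 → x₀.1 ≤ p.1 ∧ x₀.2 ≤ p.2 := by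
  intro δ
  induction δ with
  | zero => intro p h; rw [R_zero_iff] at h; subst h; exact ⟨le_rfl, le_rfl⟩
  | succ δ ih =>
    intro p h
    rw [R_succ_iff] at h
    have h1 := R_le_one g x₀ δ (p - (0,1))
    have h2 := R_le_one g x₀ δ (p - (1,0))
    have hgp := hg p
    have : R g x₀ δ (p - (0,1)) = 1 ∨ R g x₀ δ (p - (1,0)) = 1 := by omega
    rcases this with h' | h'
    · have := ih h'; rw [sub01] at this; exact ⟨this.1, by omega⟩
    · have := ih h'; rw [sub10] at this; exact ⟨by omega, this.2⟩

lemma R_step {g : Config} {x₀ : Cell} {δ : ℕ} {p : Cell}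
    (h1 : lvl x₀ p = (δ : ℤ) + 1)
    (h2 : 2 ≤ g p + R g x₀ δ (p - (0,1)) + R g x₀ δ (p - (1,0))) :
    R g x₀ (δ+1) p = 1 := by
  rw [R_succ_iff]; exact ⟨h1, h2⟩

end N192

namespace N192

/-- inflow count at `p` from toppling parents (at level `lvl p - 1`). -/
def kk (g : Config) (x₀ p : Cell) : ℕ :=
  R g x₀ (lvl x₀ p - 1).toNat (p - (0,1)) + R g x₀ (lvl x₀ p - 1).toNat (p - (1,0))

/-- Closed form for the parallel dynamics started from `g + one x₀`. -/
def val (g : Config) (x₀ : Cell) (t : ℕ) (p : Cell) : ℕ :=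
  if p = x₀ then (if t = 0 then 2 else 0)
  else if 1 ≤ lvl x₀ p ∧ lvl x₀ p ≤ (t : ℤ) then
    (if lvl x₀ p = (t : ℤ) then g p + kk g x₀ p
     else g p + kk g x₀ p - 2 * (if 2 ≤ g p + kk g x₀ p then 1 else 0))
  else g p

lemma kk_eq {g : Config} {x₀ p : Cell} {δ : ℕ} (h : lvl x₀ p = (δ : ℤ) + 1) :
    kk g x₀ p = R g x₀ δ (p - (0,1)) + R g x₀ δ (p - (1,0)) := by
  unfold kk
  have : (lvl x₀ p - 1).toNat = δ := by omega
  rw [this]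

lemma kk_le {g : Config} (hg : ∀ q, g q ≤ 1) (x₀ p : Cell) : kk g x₀ p ≤ 2 := by
  unfold kk
  have h1 := R_le_one g x₀ (lvl x₀ p - 1).toNat (p - (0,1))
  have h2 := R_le_one g x₀ (lvl x₀ p - 1).toNat (p - (1,0))
  omega

lemma lvl_self (x₀ : Cell) : lvl x₀ x₀ = 0 := by unfold lvl; ring

lemma val_hot {g : Config} (hg : ∀ q, g q ≤ 1) (x₀ : Cell) (t : ℕ) (p : Cell) :
    2 ≤ val g x₀ t p ↔ R g x₀ t p = 1 := by
  by_cases hp : p = x₀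
  · rw [hp]
    cases t with
    | zero => simp [val, R_zero_iff]
    | succ t =>
      have h0 : R g x₀ (t+1) x₀ = 0 := R_of_lvl_ne (by rw [lvl_self]; push_cast; omega)
      simp [val, h0]
  · cases t with
    | zero =>
      have h0 : R g x₀ 0 p = 0 := by rw [R_zero_def, if_neg hp]
      have hcnd : ¬ (1 ≤ lvl x₀ p ∧ lvl x₀ p ≤ (0 : ℤ)) := by omega
      simp only [val, if_neg hp, Nat.cast_zero, if_neg hcnd, h0]
      have := hg p
      omega
    | succ t =>
      by_cases hl : lvl x₀ p = ((t+1 : ℕ) : ℤ)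
      · have hcond : 1 ≤ lvl x₀ p ∧ lvl x₀ p ≤ ((t+1:ℕ) : ℤ) := by push_cast at hl ⊢ <;> omega
        have hkk : kk g x₀ p = R g x₀ t (p - (0,1)) + R g x₀ t (p - (1,0)) :=
          kk_eq (by push_cast at hl ⊢; omega)
        rw [val, if_neg hp, if_pos hcond, if_pos hl, R_succ_iff, hkk]
        constructor
        · intro h; exact ⟨by push_cast at hl ⊢; omega, by omega⟩
        · intro h; have := h.2; omega
      · have hR : R g x₀ (t+1) p = 0 := R_of_lvl_ne hl
        rw [val, if_neg hp]
        by_cases hc : 1 ≤ lvl x₀ p ∧ lvl x₀ p ≤ ((t+1:ℕ) : ℤ)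
        · rw [if_pos hc, if_neg hl, hR]
          have := kk_le hg x₀ p
          have := hg p
          constructor
          · intro h
            by_cases h2 : 2 ≤ g p + kk g x₀ p <;> simp [h2] at h <;> omega
          · omega
        · rw [if_neg hc, hR]
          have := hg p
          omega

lemma iterate_eq_val {g : Config} (hg : ∀ q, g q ≤ 1) {x₀ : Cell} (hx : g x₀ = 1) :
    ∀ t : ℕ, (F NN)^[t] (g + one x₀) = val g x₀ t := by
  intro t
  induction t with
  | zero =>
    funext p
    simp only [Function.iterate_zero, id_eq, Pi.add_apply, one, val]
    by_cases hp : p = x₀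
    · subst hp; simp [hx]
    · have hcnd : ¬ (1 ≤ lvl x₀ p ∧ lvl x₀ p ≤ (0 : ℤ)) := by omega
      simp only [if_neg hp, Nat.cast_zero, if_neg hcnd]
      simp [hp]
  | succ t ih =>
    rw [Function.iterate_succ_apply', ih]
    funext p
    rw [F_eq]
    have hotP : ∀ q, (if 2 ≤ val g x₀ t q then 1 else 0) = R g x₀ t q := by
      intro q
      by_cases h : 2 ≤ val g x₀ t q
      · rw [if_pos h, (val_hot hg x₀ t q).mp h]
      · rw [if_neg h]
        have h1 := R_le_one g x₀ t q
        rcases Nat.lt_or_ge (R g x₀ t q) 1 with h2 | h2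
        · omega
        · exact absurd ((val_hot hg x₀ t q).mpr (by omega)) h
    rw [hotP, hotP, hotP]
    -- now: val t p - 2 * R t p + (R t (p-(0,1)) + R t (p-(1,0))) = val (t+1) p
    by_cases hp : p = x₀
    · rw [hp]
      have hpar1 : R g x₀ t (x₀ - (0,1)) = 0 :=
        R_of_lvl_ne (by rw [lvl_sub01, lvl_self]; omega)
      have hpar2 : R g x₀ t (x₀ - (1,0)) = 0 :=
        R_of_lvl_ne (by rw [lvl_sub10, lvl_self]; omega)
      have vx : ∀ t' : ℕ, val g x₀ t' x₀ = if t' = 0 then 2 else 0 := by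
        intro t'; rw [val, if_pos rfl]
      cases t with
      | zero =>
        have hRx0 : R g x₀ 0 x₀ = 1 := by simp [R_zero_def]
        rw [vx, vx, hpar1, hpar2, hRx0]; simp
      | succ t =>
        have hRxs : R g x₀ (t+1) x₀ = 0 :=
          R_of_lvl_ne (by rw [lvl_self]; push_cast; omega)
        rw [vx, vx, hpar1, hpar2, hRxs]; simp
    · -- p ≠ x₀
      set L := lvl x₀ p with hL
      have hRp0 : R g x₀ 0 p = 0 := by rw [R_zero_def, if_neg hp]
      have hl1 : lvl x₀ (p - (0,1)) = L - 1 := lvl_sub01 x₀ p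
      have hl2 : lvl x₀ (p - (1,0)) = L - 1 := lvl_sub10 x₀ p
      by_cases h1 : 1 ≤ L
      · rcases lt_trichotomy ((t:ℤ)+1) L with hc | hc | hc
        · -- everything still cold
          have e1 : R g x₀ t (p - (0,1)) = 0 := R_of_lvl_ne (by omega)
          have e2 : R g x₀ t (p - (1,0)) = 0 := R_of_lvl_ne (by omega)
          have e3 : R g x₀ t p = 0 := R_of_lvl_ne (by omega)
          have v1 : val g x₀ t p = g p := by
            rw [val, if_neg hp, if_neg (by omega)]
          have v2 : val g x₀ (t+1) p = g p := by
            rw [val, if_neg hp, if_neg (by push_cast; omega)]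
          rw [v1, v2, e1, e2, e3]; omega
        · -- arrival time: L = t+1
          have e3 : R g x₀ t p = 0 := R_of_lvl_ne (by omega)
          have v1 : val g x₀ t p = g p := by
            rw [val, if_neg hp, if_neg (by omega)]
          have hkk : kk g x₀ p = R g x₀ t (p - (0,1)) + R g x₀ t (p - (1,0)) :=
            kk_eq (by omega)
          have v2 : val g x₀ (t+1) p = g p + kk g x₀ p := by
            rw [val, if_neg hp, if_pos (by push_cast; omega), if_pos (by push_cast; omega)]
          rw [v1, v2, e3, hkk]
          omega
        · -- L ≤ t
          have e1 : R g x₀ t (p - (0,1)) = 0 := R_of_lvl_ne (by omega)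
          have e2 : R g x₀ t (p - (1,0)) = 0 := R_of_lvl_ne (by omega)
          rcases eq_or_lt_of_le (show L ≤ (t:ℤ) by omega) with heq | hlt
          · -- L = t : toppling step
            obtain ⟨t', rfl⟩ : ∃ t', t = t' + 1 := by
              cases t with
              | zero => exfalso; omega
              | succ t' => exact ⟨t', rfl⟩
            have hkk : kk g x₀ p = R g x₀ t' (p - (0,1)) + R g x₀ t' (p - (1,0)) :=
              kk_eq (by omega)
            have v1 : val g x₀ (t'+1) p = g p + kk g x₀ p := by
              rw [val, if_neg hp, if_pos (by omega), if_pos (by omega)]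
            have hRt : R g x₀ (t'+1) p = if 2 ≤ g p + kk g x₀ p then 1 else 0 := by
              rw [R_succ_def, hkk]
              by_cases h2 : 2 ≤ g p + R g x₀ t' (p - (0,1)) + R g x₀ t' (p - (1,0))
              · rw [if_pos ⟨by omega, h2⟩, if_pos (by omega)]
              · rw [if_neg (by tauto), if_neg (by omega)]
            have v2 : val g x₀ (t'+1+1) p =
                g p + kk g x₀ p - 2 * (if 2 ≤ g p + kk g x₀ p then 1 else 0) := by
              rw [val, if_neg hp, if_pos (by push_cast; omega), if_neg (by push_cast; omega)]
            rw [v1, v2, hRt, e1, e2]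
            omega
          · -- L < t : already toppled, frozen
            have e3 : R g x₀ t p = 0 := R_of_lvl_ne (by omega)
            have v1 : val g x₀ t p =
                g p + kk g x₀ p - 2 * (if 2 ≤ g p + kk g x₀ p then 1 else 0) := by
              rw [val, if_neg hp, if_pos (by omega), if_neg (by omega)]
            have v2 : val g x₀ (t+1) p =
                g p + kk g x₀ p - 2 * (if 2 ≤ g p + kk g x₀ p then 1 else 0) := by
              rw [val, if_neg hp, if_pos (by push_cast; omega), if_neg (by push_cast; omega)]
            rw [v1, v2, e1, e2, e3]; omega
      · -- L ≤ 0 : never touched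
        have e1 : R g x₀ t (p - (0,1)) = 0 := R_of_lvl_ne (by omega)
        have e2 : R g x₀ t (p - (1,0)) = 0 := R_of_lvl_ne (by omega)
        have e3 : R g x₀ t p = 0 := by
          cases t with
          | zero => exact hRp0
          | succ t => exact R_of_lvl_ne (by push_cast; omega)
        have v1 : val g x₀ t p = g p := by
          rw [val, if_neg hp, if_neg (by omega)]
        have v2 : val g x₀ (t+1) p = g p := by
          rw [val, if_neg hp, if_neg (by omega)]
        rw [v1, v2, e1, e2, e3]; omega

theorem hot_iff {g : Config} (hg : ∀ q, g q ≤ 1) {x₀ : Cell} (hx : g x₀ = 1)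
    (t : ℕ) (p : Cell) :
    2 ≤ (F NN)^[t] (g + one x₀) p ↔ R g x₀ t p = 1 := by
  rw [iterate_eq_val hg hx t]
  exact val_hot hg x₀ t p

lemma frozen {g : Config} (hg : ∀ q, g q ≤ 1) {x₀ : Cell} (hx : g x₀ = 0) :
    ∀ t : ℕ, (F NN)^[t] (g + one x₀) = g + one x₀ := by
  have hb : ∀ q, (g + one x₀) q ≤ 1 := by
    intro q
    simp only [Pi.add_apply, one]
    by_cases h : q = x₀
    · subst h; simp [hx]
    · simp [h, hg q]
  intro t
  induction t with
  | zero => rfl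
  | succ t ih =>
    rw [Function.iterate_succ_apply', ih]
    funext p
    rw [F_eq]
    have h1 : ¬ (2 ≤ (g + one x₀) p) := by have := hb p; omega
    have h2 : ¬ (2 ≤ (g + one x₀) (p - (0,1))) := by have := hb (p - (0,1)); omega
    have h3 : ¬ (2 ≤ (g + one x₀) (p - (1,0))) := by have := hb (p - (1,0)); omega
    rw [if_neg h1, if_neg h2, if_neg h3]
    omega

end N192

namespace N192

lemma add01 (p : Cell) : p + ((0:ℤ),(1:ℤ)) = (p.1, p.2 + 1) := by ext <;> simp
lemma add10 (p : Cell) : p + ((1:ℤ),(0:ℤ)) = (p.1 + 1, p.2) := by ext <;> simp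
lemma subadd01 (p : Cell) : (p - (0,1)) + ((0:ℤ),(1:ℤ)) = p := by ext <;> simp
lemma subadd10 (p : Cell) : (p - (1,0)) + ((1:ℤ),(0:ℤ)) = p := by ext <;> simp

lemma chain {g : Config} (hg : ∀ q, g q ≤ 1) {x₀ : Cell} :
    ∀ {δ : ℕ} {p : Cell}, R g x₀ δ p = 1 →
    ∃ ρ : ℕ → Cell, ρ 0 = x₀ ∧ (∀ i, δ ≤ i → ρ i = p) ∧
      (∀ i, i ≤ δ → R g x₀ i (ρ i) = 1) ∧
      (∀ i, ρ (i+1) = ρ i ∨ ρ (i+1) = ρ i + (0,1) ∨ ρ (i+1) = ρ i + (1,0)) := by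
  intro δ
  induction δ with
  | zero =>
    intro p h
    rw [R_zero_iff] at h; subst h
    refine ⟨fun _ => p, rfl, fun i _ => rfl, fun i hi => ?_, fun i => Or.inl rfl⟩
    have : i = 0 := by omega
    subst this
    rw [R_zero_def]; simp
  | succ δ ih =>
    intro p h
    have h' := h
    rw [R_succ_iff] at h'
    obtain ⟨hlvl, hsum⟩ := h'
    have hr1 := R_le_one g x₀ δ (p - (0,1))
    have hr2 := R_le_one g x₀ δ (p - (1,0))
    have hgp := hg p
    have hcase : R g x₀ δ (p - (0,1)) = 1 ∨ R g x₀ δ (p - (1,0)) = 1 := by omega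
    have main : ∃ q : Cell, R g x₀ δ q = 1 ∧ (p = q + (0,1) ∨ p = q + (1,0)) := by
      rcases hcase with h' | h'
      · exact ⟨p - (0,1), h', Or.inl (subadd01 p).symm⟩
      · exact ⟨p - (1,0), h', Or.inr (subadd10 p).symm⟩
    obtain ⟨q, hq, hpq⟩ := main
    obtain ⟨ρ', h0', hT', hR', hstep'⟩ := ih hq
    refine ⟨fun i => if δ + 1 ≤ i then p else ρ' i, ?_, ?_, ?_, ?_⟩
    · simp only [if_neg (by omega : ¬ (δ + 1 ≤ 0))]; exact h0'
    · intro i hi; simp only [if_pos hi]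
    · intro i hi
      by_cases h2 : δ + 1 ≤ i
      · have : i = δ + 1 := by omega
        subst this
        simp only [if_pos h2]; exact h
      · simp only [if_neg h2]; exact hR' i (by omega)
    · intro i
      by_cases ha : δ + 1 ≤ i
      · simp only [if_pos ha, if_pos (by omega : δ + 1 ≤ i + 1)]; simp
      · by_cases hb : δ + 1 ≤ i + 1
        · have hieq : i = δ := by omega
          subst hieq
          simp only [if_pos hb, if_neg ha]
          rw [hT' _ le_rfl]
          rcases hpq with h' | h'
          · exact Or.inr (Or.inl h')
          · exact Or.inr (Or.inr h')
        · simp only [if_neg ha, if_neg hb]; exact hstep' i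

section Path

variable (ρ : ℕ → Cell) (T : ℕ) (n s : Cell)

def StepHyp : Prop :=
  ∀ i, ρ (i+1) = ρ i ∨ ρ (i+1) = ρ i + (0,1) ∨ ρ (i+1) = ρ i + (1,0)

lemma path_step {ρ} (hstep : StepHyp ρ) (i : ℕ) :
    (ρ i).1 ≤ (ρ (i+1)).1 ∧ (ρ (i+1)).1 ≤ (ρ i).1 + 1 ∧
    (ρ i).2 ≤ (ρ (i+1)).2 ∧ (ρ (i+1)).2 ≤ (ρ i).2 + 1 ∧
    ((ρ (i+1)).1 ≠ (ρ i).1 → (ρ (i+1)).2 = (ρ i).2) := by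
  rcases hstep i with h | h | h <;> rw [h]
  · exact ⟨le_rfl, by omega, le_rfl, by omega, fun h' => absurd rfl h'⟩
  · rw [add01]
    refine ⟨by simp, by simp, by simp, by simp, ?_⟩
    intro h'; exact absurd rfl h'
  · rw [add10]
    refine ⟨by simp, by simp, by simp, by simp, ?_⟩
    intro h'; rfl

lemma path_mono {ρ} (hstep : StepHyp ρ) :
    ∀ i j, i ≤ j → (ρ i).1 ≤ (ρ j).1 ∧ (ρ i).2 ≤ (ρ j).2 := by
  intro i j hij
  induction j with
  | zero =>
    have : i = 0 := by omega
    subst this; exact ⟨le_rfl, le_rfl⟩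
  | succ j ihj =>
    by_cases h : i ≤ j
    · obtain ⟨a, b⟩ := ihj h
      obtain ⟨c, _, d, _, _⟩ := path_step hstep j
      exact ⟨by omega, by omega⟩
    · have : i = j + 1 := by omega
      subst this; exact ⟨le_rfl, le_rfl⟩

def fI (x : ℤ) : ℕ := Nat.find (⟨T, Or.inr le_rfl⟩ : ∃ i, x ≤ (ρ i).1 ∨ T ≤ i)

def loF (x : ℤ) : ℤ := (ρ (fI ρ T x)).2

lemma fI_le (x : ℤ) : fI ρ T x ≤ T := by
  unfold fI
  exact Nat.find_le (p := fun i => x ≤ (ρ i).1 ∨ T ≤ i) (Or.inr le_rfl)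

lemma fI_spec (x : ℤ) : x ≤ (ρ (fI ρ T x)).1 ∨ T ≤ fI ρ T x := by
  unfold fI
  exact Nat.find_spec (p := fun i => x ≤ (ρ i).1 ∨ T ≤ i) ⟨T, Or.inr le_rfl⟩

lemma fI_min (x : ℤ) {i : ℕ} (h : i < fI ρ T x) : ¬(x ≤ (ρ i).1 ∨ T ≤ i) := by
  unfold fI at h
  exact Nat.find_min (p := fun i => x ≤ (ρ i).1 ∨ T ≤ i) ⟨T, Or.inr le_rfl⟩ h

lemma fI_mono {x y : ℤ} (h : x ≤ y) : fI ρ T x ≤ fI ρ T y := by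
  unfold fI
  exact Nat.find_mono (q := fun i => y ≤ (ρ i).1 ∨ T ≤ i)
    (p := fun i => x ≤ (ρ i).1 ∨ T ≤ i)
    (fun i hi => by
      rcases hi with hi | hi
      · exact Or.inl (by omega)
      · exact Or.inr hi)

lemma lo_ge {ρ T n} (hstep : StepHyp ρ) (hρ0 : ρ 0 = n) (x : ℤ) : n.2 ≤ loF ρ T x := by
  have := (path_mono hstep 0 (fI ρ T x) (by omega)).2
  rw [hρ0] at this; exact this

lemma lo_le {ρ T s} (hstep : StepHyp ρ) (hρT : ∀ i, T ≤ i → ρ i = s) (x : ℤ) :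
    loF ρ T x ≤ s.2 := by
  have := (path_mono hstep (fI ρ T x) T (fI_le ρ T x)).2
  rw [hρT T le_rfl] at this; exact this

lemma lo_mono {ρ T} (hstep : StepHyp ρ) {x y : ℤ} (h : x ≤ y) : loF ρ T x ≤ loF ρ T y :=
  (path_mono hstep _ _ (fI_mono ρ T h)).2

lemma col_bound {ρ T s} (hstep : StepHyp ρ) (hρT : ∀ i, T ≤ i → ρ i = s) (i : ℕ) :
    (ρ i).1 ≤ s.1 := by
  by_cases h : i ≤ T
  · have := (path_mono hstep i T h).1
    rw [hρT T le_rfl] at this; exact this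
  · rw [hρT i (by omega)]

lemma lo_top {ρ T s} (hstep : StepHyp ρ) (hρT : ∀ i, T ≤ i → ρ i = s) {x : ℤ}
    (h : s.1 < x) : loF ρ T x = s.2 := by
  rcases fI_spec ρ T x with h' | h'
  · exact absurd (le_trans h' (col_bound hstep hρT _)) (by omega)
  · unfold loF; rw [hρT _ h']

lemma col_eq {ρ T n s} (hstep : StepHyp ρ) (hρ0 : ρ 0 = n) (hρT : ∀ i, T ≤ i → ρ i = s)
    {x : ℤ} (hx1 : n.1 ≤ x) (hx2 : x ≤ s.1) : (ρ (fI ρ T x)).1 = x := by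
  have hge : x ≤ (ρ (fI ρ T x)).1 := by
    rcases fI_spec ρ T x with h' | h'
    · exact h'
    · have : fI ρ T x = T := le_antisymm (fI_le ρ T x) h'
      rw [this, hρT T le_rfl]; exact hx2
  have hle : (ρ (fI ρ T x)).1 ≤ x := by
    rcases Nat.eq_zero_or_pos (fI ρ T x) with h0 | h0
    · rw [h0, hρ0]; exact hx1
    · have hmin := fI_min ρ T x (show fI ρ T x - 1 < fI ρ T x by omega)
      push_neg at hmin
      obtain ⟨hcol, _⟩ := hmin
      have := (path_step hstep (fI ρ T x - 1)).2.1
      have heq : fI ρ T x - 1 + 1 = fI ρ T x := by omega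
      rw [heq] at this
      omega
  omega

lemma ivt (f : ℕ → ℤ) (hstep : ∀ i, f (i+1) ≤ f i + 1) :
    ∀ j i y, i ≤ j → f i ≤ y → y ≤ f j → ∃ m, i ≤ m ∧ m ≤ j ∧ f m = y := by
  intro j
  induction j with
  | zero =>
    intro i y h1 h2 h3
    have : i = 0 := by omega
    subst this
    exact ⟨0, le_rfl, le_rfl, by omega⟩
  | succ j ihj =>
    intro i y h1 h2 h3
    by_cases hij : i ≤ j
    · by_cases hy : y ≤ f j
      · obtain ⟨m, hm1, hm2, hm3⟩ := ihj i y hij h2 hy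
        exact ⟨m, hm1, by omega, hm3⟩
      · have := hstep j
        exact ⟨j+1, by omega, le_rfl, by omega⟩
    · have : i = j + 1 := by omega
      subst this
      exact ⟨j+1, le_rfl, le_rfl, by omega⟩

lemma onpath {ρ T n s} (hstep : StepHyp ρ) (hρ0 : ρ 0 = n) (hρT : ∀ i, T ≤ i → ρ i = s)
    (hT : 0 < T) {x y : ℤ} (hx1 : n.1 ≤ x) (hx2 : x ≤ s.1)
    (hy1 : loF ρ T x ≤ y) (hy2 : y ≤ loF ρ T (x+1)) :
    ∃ i, i ≤ T ∧ ρ i = (x, y) := by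
  have hcol : (ρ (fI ρ T x)).1 = x := col_eq hstep hρ0 hρT hx1 hx2
  have hfstep : ∀ i, (ρ (i+1)).2 ≤ (ρ i).2 + 1 :=
    fun i => (path_step hstep i).2.2.2.1
  rcases eq_or_lt_of_le hx2 with hxs | hxs
  · -- x = s.1
    have htop : loF ρ T (x+1) = s.2 := lo_top hstep hρT (by omega)
    have hTs : (ρ T).2 = s.2 := by rw [hρT T le_rfl]
    obtain ⟨m, hm1, hm2, hm3⟩ := ivt (fun i => (ρ i).2) hfstep T (fI ρ T x) y
      (fI_le ρ T x) hy1 (by show y ≤ (ρ T).2; omega)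
    have hc1 : x ≤ (ρ m).1 := by
      have := (path_mono hstep (fI ρ T x) m hm1).1; omega
    have hc2 : (ρ m).1 ≤ s.1 := col_bound hstep hρT m
    refine ⟨m, hm2, ?_⟩
    have : (ρ m).1 = x := by omega
    exact Prod.ext this hm3
  · -- x < s.1
    have hx2' : x + 1 ≤ s.1 := by omega
    have hcol' : (ρ (fI ρ T (x+1))).1 = x + 1 := col_eq hstep hρ0 hρT (by omega) hx2'
    have hpos : 0 < fI ρ T (x+1) := by
      rcases Nat.eq_zero_or_pos (fI ρ T (x+1)) with h0 | h0
      · exfalso; rw [h0, hρ0] at hcol'; omega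
      · exact h0
    set j := fI ρ T (x+1) - 1 with hj
    have hjlt : j < fI ρ T (x+1) := by omega
    have hmin := fI_min ρ T (x+1) hjlt
    push_neg at hmin
    obtain ⟨hjcol, hjT⟩ := hmin
    have hij : fI ρ T x ≤ j := by
      have h' : fI ρ T x ≤ fI ρ T (x+1) := fI_mono ρ T (by omega)
      have hne : fI ρ T x ≠ fI ρ T (x+1) := by
        intro he; rw [← he] at hcol'; omega
      omega
    have hjcolge : x ≤ (ρ j).1 := by
      have := (path_mono hstep (fI ρ T x) j hij).1; omega
    have hjcoleq : (ρ j).1 = x := by omega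
    have hjsucc : j + 1 = fI ρ T (x+1) := by omega
    have hjh : (ρ j).2 = loF ρ T (x+1) := by
      have := (path_step hstep j).2.2.2.2
      rw [hjsucc] at this
      have hne : (ρ (fI ρ T (x+1))).1 ≠ (ρ j).1 := by omega
      have := this hne
      unfold loF; omega
    obtain ⟨m, hm1, hm2, hm3⟩ := ivt (fun i => (ρ i).2) hfstep j (fI ρ T x) y hij hy1
      (by show y ≤ (ρ j).2; omega)
    have hc1 : x ≤ (ρ m).1 := by
      have := (path_mono hstep (fI ρ T x) m hm1).1; omega
    have hc2 : (ρ m).1 ≤ x := by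
      have := (path_mono hstep m j hm2).1; omega
    refine ⟨m, by omega, Prod.ext (by omega) hm3⟩

end Path

end N192

namespace N192

/-- Core lemma: if a signal travels from `n` to `s` (level `T`) and another from
`w` to `e`, with `w` strictly below-right of `n`'s start, `e` strictly above `s`,
and `e` on a diagonal not beyond `s`'s, then the `n`-avalanche also reaches `e`,
within level `T`. -/
lemma core {g : Config} (hg : ∀ q, g q ≤ 1) {n w s e : Cell} {T : ℕ} (hT : 0 < T)
    (hs : R g n T s = 1) (he : R g w T e = 1)
    (h1 : n.1 ≤ w.1) (h2 : w.2 < n.2) (h3 : s.2 < e.2)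
    (hcap : e.1 + e.2 ≤ s.1 + s.2) :
    ∃ γ : ℕ, γ ≤ T ∧ R g n γ e = 1 := by
  obtain ⟨ρ, hρ0, hρT, hρR, hρstep⟩ := chain hg hs
  have hstep : StepHyp ρ := hρstep
  have hTlvl : lvl n s = (T : ℤ) := R_lvl hs
  have key : ∀ δ : ℕ, ∀ q : Cell, R g w δ q = 1 → q.1 + q.2 ≤ e.1 + e.2 →
      loF ρ T q.1 ≤ q.2 → ∃ γ : ℕ, R g n γ q = 1 := by
    intro δ
    induction δ with
    | zero =>
      intro q hq hqcap hqlo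
      rw [R_zero_iff] at hq; subst hq
      have := lo_ge (T := T) hstep hρ0 (q.1)
      omega
    | succ δ ih =>
      intro q hq hqcap hqlo
      rw [R_succ_iff] at hq
      obtain ⟨hqlvl, hqsum⟩ := hq
      have hr1 := R_le_one g w δ (q - (0,1))
      have hr2 := R_le_one g w δ (q - (1,0))
      have hwq := R_ge hg (show R g w (δ+1) q = 1 from by rw [R_succ_iff]; exact ⟨hqlvl, hqsum⟩)
      by_cases hOn : q.2 ≤ loF ρ T (q.1 + 1)
      · -- `q` is on the staircase from `n` to `s`
        have hxs : q.1 ≤ s.1 := by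
          by_contra hgt
          push_neg at hgt
          have htop : loF ρ T q.1 = s.2 := lo_top hstep hρT hgt
          omega
        have hxn : n.1 ≤ q.1 := le_trans h1 hwq.1
        obtain ⟨i, hiT, hieq⟩ := onpath hstep hρ0 hρT hT hxn hxs hqlo hOn
        refine ⟨i, ?_⟩
        have : ρ i = q := by rw [hieq]
        rw [← this]
        exact hρR i hiT
      · -- `q` is strictly above the staircase
        push_neg at hOn
        have hlom : loF ρ T q.1 ≤ loF ρ T (q.1 + 1) := lo_mono hstep (by omega)
        have hlom' : loF ρ T (q.1 - 1) ≤ loF ρ T q.1 := lo_mono hstep (by omega)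
        have hgb := hg q
        have hcase : R g w δ (q - (0,1)) = 1 ∨ R g w δ (q - (1,0)) = 1 := by omega
        have hIH1 : R g w δ (q - (0,1)) = 1 → ∃ γ, R g n γ (q - (0,1)) = 1 := by
          intro hpar
          apply ih _ hpar
          · rw [sub01]; simp; omega
          · rw [sub01]; simp; omega
        have hIH2 : R g w δ (q - (1,0)) = 1 → ∃ γ, R g n γ (q - (1,0)) = 1 := by
          intro hpar
          apply ih _ hpar
          · rw [sub10]; simp; omega
          · rw [sub10]; simp; omega
        by_cases hgq : g q = 1
        · rcases hcase with hpar | hpar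
          · obtain ⟨γ, hγ⟩ := hIH1 hpar
            have hγl := R_lvl hγ
            rw [lvl_sub01] at hγl
            refine ⟨γ + 1, R_step (by push_cast; omega) ?_⟩
            rw [hγ]
            omega
          · obtain ⟨γ, hγ⟩ := hIH2 hpar
            have hγl := R_lvl hγ
            rw [lvl_sub10] at hγl
            refine ⟨γ + 1, R_step (by push_cast; omega) ?_⟩
            rw [hγ]
            omega
        · have hgq0 : g q = 0 := by omega
          have hpar1 : R g w δ (q - (0,1)) = 1 := by omega
          have hpar2 : R g w δ (q - (1,0)) = 1 := by omega
          obtain ⟨γ1, hγ1⟩ := hIH1 hpar1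
          obtain ⟨γ2, hγ2⟩ := hIH2 hpar2
          have hl1 := R_lvl hγ1
          have hl2 := R_lvl hγ2
          rw [lvl_sub01] at hl1
          rw [lvl_sub10] at hl2
          have : γ1 = γ2 := by omega
          subst this
          refine ⟨γ1 + 1, R_step (by push_cast; omega) ?_⟩
          rw [hγ1, hγ2]
          omega
  have helo : loF ρ T e.1 ≤ e.2 := le_trans (lo_le hstep hρT e.1) (le_of_lt h3)
  obtain ⟨γ, hγ⟩ := key T e he le_rfl helo
  have hγl := R_lvl hγ
  refine ⟨γ, ?_, hγ⟩
  have hel : lvl n e ≤ lvl n s := by unfold lvl; omega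
  omega

/-- Transposition symmetry. -/
def sw (p : Cell) : Cell := (p.2, p.1)

lemma R_sw (g : Config) (x₀ : Cell) :
    ∀ (δ : ℕ) (p : Cell), R (fun q => g (sw q)) (sw x₀) δ (sw p) = R g x₀ δ p := by
  intro δ
  induction δ with
  | zero =>
    intro p
    rw [R_zero_def, R_zero_def]
    have : sw p = sw x₀ ↔ p = x₀ := by
      constructor
      · intro h
        have h1 : (sw p).1 = (sw x₀).1 := by rw [h]
        have h2 : (sw p).2 = (sw x₀).2 := by rw [h]
        simp only [sw] at h1 h2
        exact Prod.ext h2 h1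
      · intro h; rw [h]
    by_cases h : p = x₀
    · rw [if_pos h, if_pos (this.mpr h)]
    · rw [if_neg h, if_neg (fun h' => h (this.mp h'))]
  | succ δ ih =>
    intro p
    rw [R_succ_def, R_succ_def]
    have e1 : sw p - ((0:ℤ),(1:ℤ)) = sw (p - (1,0)) := by
      simp [sw, sub01, sub10]
    have e2 : sw p - ((1:ℤ),(0:ℤ)) = sw (p - (0,1)) := by
      simp [sw, sub01, sub10]
    have e3 : lvl (sw x₀) (sw p) = lvl x₀ p := by
      simp only [lvl, sw]; ring
    have e5 : sw (sw p) = p := by simp [sw]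
    have hcomm : g p + R g x₀ δ (p - (1,0)) + R g x₀ δ (p - (0,1))
        = g p + R g x₀ δ (p - (0,1)) + R g x₀ δ (p - (1,0)) := by omega
    rw [e1, e2, e3, e5, ih (p - (1,0)), ih (p - (0,1)), hcomm]

end N192

set_option maxHeartbeats 2000000 in
open N192 in
theorem nbhd192_no_timed_crossover :
    ∀ M N' T : ℕ, 0 < M → 0 < N' → 0 < T →
      ¬ ∃ g n e s w, IsTimedCrossoverGate
        ({(0,1),(1,0)} : Finset Cell) M N' T g n e s w := by
  intro M N' T hM hN' hT
  rintro ⟨g, n, e, s, w, hst, hsupp, hnR, heR, hsR, hwR, hnc, hec, hsc, hwc,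
    iN, iE, iS, iW, hn, heS, hsS, hwS, hNS, hWE, huniv, hns, hcoldn, hwe, hcoldw⟩
  rw [show ({(0,1),(1,0)} : Finset Cell) = NN from rfl] at hst hns hcoldn hwe hcoldw
  have hg : ∀ p, g p ≤ 1 := by
    intro p
    have := hst p
    rw [theta_NN] at this
    omega
  rw [theta_NN] at hns hwe
  -- the seeds must carry a grain
  have gn1 : g n = 1 := by
    by_contra h
    have h0 : g n = 0 := by have := hg n; omega
    rw [frozen hg h0 T] at hns
    simp only [Pi.add_apply, one] at hns
    by_cases hsn : s = n
    · rw [if_pos hsn, hsn, h0] at hns; omega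
    · rw [if_neg hsn] at hns; have := hg s; omega
  have gw1 : g w = 1 := by
    by_contra h
    have h0 : g w = 0 := by have := hg w; omega
    rw [frozen hg h0 T] at hwe
    simp only [Pi.add_apply, one] at hwe
    by_cases hew : e = w
    · rw [if_pos hew, hew, h0] at hwe; omega
    · rw [if_neg hew] at hwe; have := hg e; omega
  have hsR1 : R g n T s = 1 := (hot_iff hg gn1 T s).mp hns
  have heR1 : R g w T e = 1 := (hot_iff hg gw1 T e).mp hwe
  have hge_s := R_ge hg hsR1
  have hge_e := R_ge hg heR1
  have hkilln : ∀ p, p ∈ side M N' iW ∪ side M N' iE → ∀ γ, γ ≤ T → R g n γ p = 1 → False := by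
    intro p hp γ hγ hR
    have hc := hcoldn p hp γ hγ
    rw [theta_NN] at hc
    have h2 := (hot_iff hg gn1 γ p).mpr hR
    omega
  have hkillw : ∀ p, p ∈ side M N' iN ∪ side M N' iS → ∀ γ, γ ≤ T → R g w γ p = 1 → False := by
    intro p hp γ hγ hR
    have hc := hcoldw p hp γ hγ
    rw [theta_NN] at hc
    have h2 := (hot_iff hg gw1 γ p).mpr hR
    omega
  simp only [Rect, Set.mem_setOf_eq] at hnR heR hsR hwR
  simp only [Corners, Set.mem_insert_iff, Set.mem_singleton_iff, not_or, Prod.ext_iff] at hnc hec hsc hwc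
  fin_cases iN <;> fin_cases iE <;> fin_cases iS <;> fin_cases iW <;>
    try (revert hNS hWE huniv; decide)
  -- 8 cases remain
  all_goals (
    have hemem := heS
    have hsmem := hsS
    simp (config := { decide := true }) only [side, ite_true, ite_false, Set.mem_setOf_eq] at hn heS hsS hwS)
  all_goals clear hNS hWE huniv hcoldn hcoldw hst hsupp hns hwe
  all_goals try omega
  -- two genuine crossing configurations remain
  · -- iN = 0 (left), iE = 3 (top), iS = 2 (right), iW = 1 (bottom)
    rcases le_total (e.1 + e.2) (s.1 + s.2) with hc | hc
    · obtain ⟨γ, hγT, hRe⟩ := core hg hT hsR1 heR1 (by omega) (by omega) (by omega) hc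
      exact hkilln e ((Set.mem_union _ _ _).mpr (Or.inr hemem)) γ hγT hRe
    · have hsT : R (fun q => g (sw q)) (sw n) T (sw s) = 1 := by rw [R_sw]; exact hsR1
      have heT : R (fun q => g (sw q)) (sw w) T (sw e) = 1 := by rw [R_sw]; exact heR1
      have hgT : ∀ p, (fun q => g (sw q)) p ≤ 1 := fun p => hg _
      obtain ⟨γ, hγT, hRs⟩ := core hgT hT heT hsT
        (by show w.2 ≤ n.2; omega) (by show n.1 < w.1; omega)
        (by show e.1 < s.1; omega) (by show s.2 + s.1 ≤ e.2 + e.1; omega)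
      rw [R_sw g w γ s] at hRs
      exact hkillw s ((Set.mem_union _ _ _).mpr (Or.inr hsmem)) γ hγT hRs
  · -- iN = 1 (bottom), iE = 2 (right), iS = 3 (top), iW = 0 (left)
    rcases le_total (s.1 + s.2) (e.1 + e.2) with hc | hc
    · obtain ⟨γ, hγT, hRs⟩ := core hg hT heR1 hsR1 (by omega) (by omega) (by omega) hc
      exact hkillw s ((Set.mem_union _ _ _).mpr (Or.inr hsmem)) γ hγT hRs
    · have hsT : R (fun q => g (sw q)) (sw n) T (sw s) = 1 := by rw [R_sw]; exact hsR1
      have heT : R (fun q => g (sw q)) (sw w) T (sw e) = 1 := by rw [R_sw]; exact heR1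
      have hgT : ∀ p, (fun q => g (sw q)) p ≤ 1 := fun p => hg _
      obtain ⟨γ, hγT, hRe⟩ := core hgT hT hsT heT
        (by show n.2 ≤ w.2; omega) (by show w.1 < n.1; omega)
        (by show s.1 < e.1; omega) (by show e.2 + e.1 ≤ s.2 + s.1; omega)
      rw [R_sw g n γ e] at hRe
      exact hkilln e ((Set.mem_union _ _ _).mpr (Or.inr hemem)) γ hγT hRe
end Sandpile
end

section
/- The neighborhood N = {(1,0), (1,−1)} (neighborhood 66 in the 8-bit numbering of subsets of the Moore neighborhood) does not admit a timed crossover gate: for all sizes M, N' ∈ ℕ⁺ and all delays T ∈ ℕ⁺, no timed crossover gate of size M × N' and delay T exists for this sandpile model. -/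
namespace Sandpile

/-- The specific neighborhood {(1,0),(1,-1)}. -/
def N66 : Finset Cell := {(1,0),(1,-1)}

lemma θ66 : θ N66 = 2 := by decide

lemma F_eq (c : Config) (p : Cell) :
    F N66 c p = c p - 2 * (if 2 ≤ c p then 1 else 0)
      + ((if 2 ≤ c (p.1 - 1, p.2) then 1 else 0)
         + (if 2 ≤ c (p.1 - 1, p.2 + 1) then 1 else 0)) := by
  have h1 : p - ((1 : ℤ), (0 : ℤ)) = (p.1 - 1, p.2) := by
    simp [Prod.ext_iff]
  have h2 : p - ((1 : ℤ), (-1 : ℤ)) = (p.1 - 1, p.2 + 1) := by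
    simp [Prod.ext_iff]
  rw [F, θ66]
  rw [show (N66 : Finset Cell) = insert ((1:ℤ),(0:ℤ)) {((1:ℤ),(-1:ℤ))} from rfl]
  rw [Finset.sum_insert (by decide), Finset.sum_singleton, h1, h2]

/-- Key lemma: starting from a stable configuration plus one grain at `a`,
any cell at threshold at time `t` has first coordinate exactly `a.1 + t`. -/
lemma key (g : Config) (hg : ∀ p, g p ≤ 1) (a : Cell) :
    ∀ t : ℕ, (∀ p, (F N66)^[t] (g + one a) p ≤ 3) ∧
      (∀ p, 2 ≤ (F N66)^[t] (g + one a) p → p.1 = a.1 + t) := by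
  intro t
  induction t with
  | zero =>
    constructor
    · intro p
      have := hg p
      simp only [Function.iterate_zero, id, Pi.add_apply, one]
      split_ifs <;> omega
    · intro p hp
      simp only [Function.iterate_zero, id, Pi.add_apply, one] at hp
      have := hg p
      split_ifs at hp with h
      · rw [h]; simp
      · omega
  | succ t ih =>
    obtain ⟨ih1, ih2⟩ := ih
    have step : ∀ p, (F N66)^[t+1] (g + one a) p
        = F N66 ((F N66)^[t] (g + one a)) p := by
      intro p; rw [Function.iterate_succ_apply']
    constructor
    · intro p
      rw [step, F_eq]
      have b0 := ih1 p
      have b1 : (if 2 ≤ (F N66)^[t] (g + one a) (p.1 - 1, p.2) then 1 else 0) ≤ 1 := by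
        split_ifs <;> omega
      have b2 : (if 2 ≤ (F N66)^[t] (g + one a) (p.1 - 1, p.2 + 1) then 1 else 0) ≤ 1 := by
        split_ifs <;> omega
      split_ifs <;> omega
    · intro p hp
      rw [step, F_eq] at hp
      by_cases hx : p.1 = a.1 + (t+1 : ℕ)
      · exact hx
      · exfalso
        have e1 : ¬ 2 ≤ (F N66)^[t] (g + one a) (p.1 - 1, p.2) := by
          intro h
          have := ih2 _ h
          simp only at this
          push_cast at hx this
          omega
        have e2 : ¬ 2 ≤ (F N66)^[t] (g + one a) (p.1 - 1, p.2 + 1) := by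
          intro h
          have := ih2 _ h
          simp only at this
          push_cast at hx this
          omega
        rw [if_neg e1, if_neg e2] at hp
        by_cases h0 : 2 ≤ (F N66)^[t] (g + one a) p
        · have := ih1 p
          rw [if_pos h0] at hp
          omega
        · rw [if_neg h0] at hp
          omega

set_option maxHeartbeats 1000000 in
lemma fin4_cases : ∀ iN iE iS iW : Fin 4,
    ((iN : ℤ) - (iS : ℤ)).natAbs = 2 → ((iW : ℤ) - (iE : ℤ)).natAbs = 2 →
    ({iN, iE, iS, iW} : Finset (Fin 4)) = Finset.univ →
    ((iN = 0 ∧ iS = 2 ∧ ((iW = 1 ∧ iE = 3) ∨ (iW = 3 ∧ iE = 1))) ∨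
    (iN = 2 ∧ iS = 0 ∧ ((iW = 1 ∧ iE = 3) ∨ (iW = 3 ∧ iE = 1))) ∨
    (iN = 1 ∧ iS = 3 ∧ ((iW = 0 ∧ iE = 2) ∨ (iW = 2 ∧ iE = 0))) ∨
    (iN = 3 ∧ iS = 1 ∧ ((iW = 0 ∧ iE = 2) ∨ (iW = 2 ∧ iE = 0)))) := by
  intro iN iE iS iW
  fin_cases iN <;> fin_cases iE <;> fin_cases iS <;> fin_cases iW <;> decide

theorem nbhd66_no_timed_crossover :
    ∀ M N' T : ℕ, 0 < M → 0 < N' → 0 < T →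
      ¬ ∃ g n e s w, IsTimedCrossoverGate
        ({(1,0),(1,-1)} : Finset Cell) M N' T g n e s w := by
  intro M N' T hM hN' hT
  rintro ⟨g, n, e, s, w, hstable, hsupp, hnR, heR, hsR, hwR, hnC, heC, hsC, hwC,
    iN, iE, iS, iW, hn, he, hs, hw, hNS, hWE, huniv, hns, -, hwe, -⟩
  have hθ : θ ({(1,0),(1,-1)} : Finset Cell) = 2 := θ66
  have hgle : ∀ p, g p ≤ 1 := by
    intro p
    have := hstable p
    rw [hθ] at this
    omega
  have hns' : 2 ≤ (F N66)^[T] (g + one n) s := by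
    rw [← hθ]; exact hns
  have hwe' : 2 ≤ (F N66)^[T] (g + one w) e := by
    rw [← hθ]; exact hwe
  have hs1 : s.1 = n.1 + (T : ℤ) := (key g hgle n T).2 s hns'
  have he1 : e.1 = w.1 + (T : ℤ) := (key g hgle w T).2 e hwe'
  clear hns hwe hns' hwe' hsupp hstable hgle
  rcases fin4_cases iN iE iS iW hNS hWE huniv with
      ⟨rfl, rfl, (⟨rfl, rfl⟩ | ⟨rfl, rfl⟩)⟩ | ⟨rfl, rfl, (⟨rfl, rfl⟩ | ⟨rfl, rfl⟩)⟩ |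
      ⟨rfl, rfl, (⟨rfl, rfl⟩ | ⟨rfl, rfl⟩)⟩ | ⟨rfl, rfl, (⟨rfl, rfl⟩ | ⟨rfl, rfl⟩)⟩ <;>
    · simp only [side, Fin.reduceEq, reduceIte, Set.mem_setOf_eq] at hn hs hw he
      simp only [Corners, Set.mem_insert_iff, Set.mem_singleton_iff, Prod.ext_iff, not_or,
        not_and] at hnC heC hsC hwC
      simp only [Rect, Set.mem_setOf_eq] at hnR heR hsR hwR
      omega

end Sandpile
end

section
/- The neighborhood N = {(1,0), (0,−1), (−1,1), (1,1), (1,−1), (−1,−1)} (neighborhood 111 in the 8-bit numbering of subsets of the Moore neighborhood) admits a timed crossover gate of size 10 × 10 and delay 12. -/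
namespace Sandpile

/-! ### Auxiliary machinery for explicit computation -/


def NN : Finset Cell := {(1,0),(0,-1),(-1,1),(1,1),(1,-1),(-1,-1)}

theorem theta_eq : θ NN = 6 := by decide

def InBox (p : Cell) : Prop := -1 ≤ p.1 ∧ p.1 ≤ 10 ∧ -1 ≤ p.2 ∧ p.2 ≤ 10
instance : DecidablePred InBox := fun p => by unfold InBox; infer_instance

def ofTbl (L : List (List ℕ)) : Config := fun p =>
  if InBox p then (L.getD (p.2+1).toNat []).getD (p.1+1).toNat 0 else 0

lemma ofTbl_out (L) {p : Cell} (h : ¬ InBox p) : ofTbl L p = 0 := by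
  simp [ofTbl, h]

lemma nn_small : ∀ q ∈ NN, -1 ≤ q.1 ∧ q.1 ≤ 1 ∧ -1 ≤ q.2 ∧ q.2 ≤ 1 := by decide

def Ring (L : List (List ℕ)) : Prop :=
  ∀ i < 12, ∀ j < 12, (i = 0 ∨ i = 11 ∨ j = 0 ∨ j = 11) → (L.getD j []).getD i 0 < 6

instance (L) : Decidable (Ring L) := by unfold Ring; infer_instance

lemma ofTbl_near_lt (L : List (List ℕ)) (hr : Ring L) {a b : ℤ}
    (hout : ¬ InBox (a, b)) (q : Cell) (h1 : a - 1 ≤ q.1) (h2 : q.1 ≤ a + 1)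
    (h3 : b - 1 ≤ q.2) (h4 : q.2 ≤ b + 1) : ofTbl L q < 6 := by
  by_cases hin : InBox q
  · obtain ⟨x, y⟩ := q
    unfold InBox at hin hout
    simp only at hin hout h1 h2 h3 h4
    have hi : (x + 1).toNat < 12 := by omega
    have hj : (y + 1).toNat < 12 := by omega
    have hd : (x+1).toNat = 0 ∨ (x+1).toNat = 11 ∨ (y+1).toNat = 0 ∨ (y+1).toNat = 11 := by omega
    have := hr _ hi _ hj hd
    simpa [ofTbl, InBox, hin.1, hin.2.1, hin.2.2.1, hin.2.2.2] using this
  · simp [ofTbl, hin]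

lemma step_eq (T T' : List (List ℕ)) (hr : Ring T)
    (h1 : ∀ i < 12, ∀ j < 12,
      F NN (ofTbl T) (((i:ℕ):ℤ) - 1, ((j:ℕ):ℤ) - 1) = ofTbl T' (((i:ℕ):ℤ) - 1, ((j:ℕ):ℤ) - 1)) :
    F NN (ofTbl T) = ofTbl T' := by
  funext p
  obtain ⟨a, b⟩ := p
  by_cases hin : InBox (a, b)
  · obtain ⟨ha1, ha2, hb1, hb2⟩ := hin
    simp only at ha1 ha2 hb1 hb2
    have e1 : (((a+1).toNat : ℕ) : ℤ) - 1 = a := by omega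
    have e2 : (((b+1).toNat : ℕ) : ℤ) - 1 = b := by omega
    have := h1 (a+1).toNat (by omega) (b+1).toNat (by omega)
    rwa [e1, e2] at this
  · rw [ofTbl_out T' hin]
    show ofTbl T (a,b) - θ NN * _ + _ = 0
    rw [ofTbl_out T hin]
    have hsum : (∑ p' ∈ NN, if θ NN ≤ ofTbl T ((a,b) - p') then 1 else 0) = 0 := by
      apply Finset.sum_eq_zero
      intro q hq
      obtain ⟨hq1, hq2, hq3, hq4⟩ := nn_small q hq
      have hsub : (a,b) - q = (a - q.1, b - q.2) := rfl
      have hlt : ofTbl T ((a,b) - q) < 6 := by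
        rw [hsub]
        exact ofTbl_near_lt T hr hin (a - q.1, b - q.2) (by simp; omega) (by simp; omega)
          (by simp; omega) (by simp; omega)
      rw [theta_eq, if_neg (by omega)]
    rw [hsum, theta_eq]
    simp

lemma ofTbl_lt_all (L : List (List ℕ))
    (h : ∀ i < 12, ∀ j < 12, ofTbl L (((i:ℕ):ℤ) - 1, ((j:ℕ):ℤ) - 1) < 6) :
    ∀ p, ofTbl L p < 6 := by
  intro ⟨a, b⟩
  by_cases hin : InBox (a, b)
  · obtain ⟨ha1, ha2, hb1, hb2⟩ := hin
    simp only at ha1 ha2 hb1 hb2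
    have e1 : (((a+1).toNat : ℕ) : ℤ) - 1 = a := by omega
    have e2 : (((b+1).toNat : ℕ) : ℤ) - 1 = b := by omega
    have := h (a+1).toNat (by omega) (b+1).toNat (by omega)
    rwa [e1, e2] at this
  · rw [ofTbl_out L hin]; norm_num

lemma add_one_eq (T T' : List (List ℕ)) (q : Cell) (hq : InBox q)
    (h : ∀ i < 12, ∀ j < 12,
      ofTbl T (((i:ℕ):ℤ) - 1, ((j:ℕ):ℤ) - 1) + one q (((i:ℕ):ℤ) - 1, ((j:ℕ):ℤ) - 1)
        = ofTbl T' (((i:ℕ):ℤ) - 1, ((j:ℕ):ℤ) - 1)) :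
    ofTbl T + one q = ofTbl T' := by
  funext p
  obtain ⟨a, b⟩ := p
  rw [Pi.add_apply]
  by_cases hin : InBox (a, b)
  · obtain ⟨ha1, ha2, hb1, hb2⟩ := hin
    simp only at ha1 ha2 hb1 hb2
    have e1 : (((a+1).toNat : ℕ) : ℤ) - 1 = a := by omega
    have e2 : (((b+1).toNat : ℕ) : ℤ) - 1 = b := by omega
    have := h (a+1).toNat (by omega) (b+1).toNat (by omega)
    rwa [e1, e2] at this
  · have hne : (a, b) ≠ q := by
      intro he; rw [← he] at hq; exact hin hq
    rw [ofTbl_out T hin, ofTbl_out T' hin, one, if_neg hne]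

def Tg : List (List ℕ) := [
[0,0,0,0,0,0,0,0,0,0,0,0],
[0,0,0,0,0,0,5,0,0,0,0,0],
[0,0,5,4,0,2,3,0,5,2,0,0],
[0,0,3,5,4,2,4,4,4,0,0,0],
[0,0,5,5,1,5,5,4,2,4,0,0],
[0,0,2,5,4,3,3,4,5,0,5,0],
[0,0,5,0,4,3,0,5,5,2,0,0],
[0,0,5,2,5,5,4,2,2,5,0,0],
[0,5,3,0,1,5,2,2,1,0,0,0],
[0,0,0,5,4,3,2,5,0,2,0,0],
[0,0,0,5,0,0,0,0,0,0,0,0],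
[0,0,0,0,0,0,0,0,0,0,0,0]]
def TN0 : List (List ℕ) := [
[0,0,0,0,0,0,0,0,0,0,0,0],
[0,0,0,0,0,0,5,0,0,0,0,0],
[0,0,5,4,0,2,3,0,5,2,0,0],
[0,0,3,5,4,2,4,4,4,0,0,0],
[0,0,5,5,1,5,5,4,2,4,0,0],
[0,0,2,5,4,3,3,4,5,0,5,0],
[0,0,5,0,4,3,0,5,5,2,0,0],
[0,0,5,2,5,5,4,2,2,5,0,0],
[0,5,3,0,1,5,2,2,1,0,0,0],
[0,0,0,5,4,3,2,5,0,2,0,0],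
[0,0,0,6,0,0,0,0,0,0,0,0],
[0,0,0,0,0,0,0,0,0,0,0,0]]
def TN1 : List (List ℕ) := [
[0,0,0,0,0,0,0,0,0,0,0,0],
[0,0,0,0,0,0,5,0,0,0,0,0],
[0,0,5,4,0,2,3,0,5,2,0,0],
[0,0,3,5,4,2,4,4,4,0,0,0],
[0,0,5,5,1,5,5,4,2,4,0,0],
[0,0,2,5,4,3,3,4,5,0,5,0],
[0,0,5,0,4,3,0,5,5,2,0,0],
[0,0,5,2,5,5,4,2,2,5,0,0],
[0,5,3,0,1,5,2,2,1,0,0,0],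
[0,0,1,6,5,3,2,5,0,2,0,0],
[0,0,0,0,1,0,0,0,0,0,0,0],
[0,0,1,0,1,0,0,0,0,0,0,0]]
def TN2 : List (List ℕ) := [
[0,0,0,0,0,0,0,0,0,0,0,0],
[0,0,0,0,0,0,5,0,0,0,0,0],
[0,0,5,4,0,2,3,0,5,2,0,0],
[0,0,3,5,4,2,4,4,4,0,0,0],
[0,0,5,5,1,5,5,4,2,4,0,0],
[0,0,2,5,4,3,3,4,5,0,5,0],
[0,0,5,0,4,3,0,5,5,2,0,0],
[0,0,5,2,5,5,4,2,2,5,0,0],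
[0,5,4,1,2,5,2,2,1,0,0,0],
[0,0,1,0,6,3,2,5,0,2,0,0],
[0,0,1,0,2,0,0,0,0,0,0,0],
[0,0,1,0,1,0,0,0,0,0,0,0]]
def TN3 : List (List ℕ) := [
[0,0,0,0,0,0,0,0,0,0,0,0],
[0,0,0,0,0,0,5,0,0,0,0,0],
[0,0,5,4,0,2,3,0,5,2,0,0],
[0,0,3,5,4,2,4,4,4,0,0,0],
[0,0,5,5,1,5,5,4,2,4,0,0],
[0,0,2,5,4,3,3,4,5,0,5,0],
[0,0,5,0,4,3,0,5,5,2,0,0],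
[0,0,5,2,5,5,4,2,2,5,0,0],
[0,5,4,2,3,6,2,2,1,0,0,0],
[0,0,1,0,0,4,2,5,0,2,0,0],
[0,0,1,1,2,1,0,0,0,0,0,0],
[0,0,1,0,1,0,0,0,0,0,0,0]]
def TN4 : List (List ℕ) := [
[0,0,0,0,0,0,0,0,0,0,0,0],
[0,0,0,0,0,0,5,0,0,0,0,0],
[0,0,5,4,0,2,3,0,5,2,0,0],
[0,0,3,5,4,2,4,4,4,0,0,0],
[0,0,5,5,1,5,5,4,2,4,0,0],
[0,0,2,5,4,3,3,4,5,0,5,0],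
[0,0,5,0,4,3,0,5,5,2,0,0],
[0,0,5,2,6,6,5,2,2,5,0,0],
[0,5,4,2,3,0,3,2,1,0,0,0],
[0,0,1,0,1,4,3,5,0,2,0,0],
[0,0,1,1,2,1,0,0,0,0,0,0],
[0,0,1,0,1,0,0,0,0,0,0,0]]
def TN5 : List (List ℕ) := [
[0,0,0,0,0,0,0,0,0,0,0,0],
[0,0,0,0,0,0,5,0,0,0,0,0],
[0,0,5,4,0,2,3,0,5,2,0,0],
[0,0,3,5,4,2,4,4,4,0,0,0],
[0,0,5,5,1,5,5,4,2,4,0,0],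
[0,0,2,5,4,3,3,4,5,0,5,0],
[0,0,5,1,6,5,1,5,5,2,0,0],
[0,0,5,2,0,1,6,2,2,5,0,0],
[0,5,4,3,4,1,4,2,1,0,0,0],
[0,0,1,0,1,4,3,5,0,2,0,0],
[0,0,1,1,2,1,0,0,0,0,0,0],
[0,0,1,0,1,0,0,0,0,0,0,0]]
def TN6 : List (List ℕ) := [
[0,0,0,0,0,0,0,0,0,0,0,0],
[0,0,0,0,0,0,5,0,0,0,0,0],
[0,0,5,4,0,2,3,0,5,2,0,0],
[0,0,3,5,4,2,4,4,4,0,0,0],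
[0,0,5,5,1,5,5,4,2,4,0,0],
[0,0,2,6,5,4,3,4,5,0,5,0],
[0,0,5,1,0,7,2,6,5,2,0,0],
[0,0,5,3,0,2,0,3,2,5,0,0],
[0,5,4,3,4,2,4,3,1,0,0,0],
[0,0,1,0,1,4,3,5,0,2,0,0],
[0,0,1,1,2,1,0,0,0,0,0,0],
[0,0,1,0,1,0,0,0,0,0,0,0]]
def TN7 : List (List ℕ) := [
[0,0,0,0,0,0,0,0,0,0,0,0],
[0,0,0,0,0,0,5,0,0,0,0,0],
[0,0,5,4,0,2,3,0,5,2,0,0],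
[0,0,3,5,4,2,4,4,4,0,0,0],
[0,0,6,6,2,5,5,4,2,4,0,0],
[0,0,2,0,7,5,5,5,6,0,5,0],
[0,0,6,1,1,1,3,0,6,2,0,0],
[0,0,5,3,1,2,2,3,3,5,0,0],
[0,5,4,3,4,2,4,3,1,0,0,0],
[0,0,1,0,1,4,3,5,0,2,0,0],
[0,0,1,1,2,1,0,0,0,0,0,0],
[0,0,1,0,1,0,0,0,0,0,0,0]]
def TN8 : List (List ℕ) := [
[0,0,0,0,0,0,0,0,0,0,0,0],
[0,0,0,0,0,0,5,0,0,0,0,0],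
[0,0,5,4,0,2,3,0,5,2,0,0],
[0,1,5,7,5,2,4,4,4,0,0,0],
[0,0,0,2,4,6,5,5,3,5,0,0],
[0,2,4,2,2,6,5,6,1,2,5,0],
[0,0,0,3,1,2,3,1,0,4,0,0],
[0,1,5,4,1,2,2,4,3,6,0,0],
[0,5,4,3,4,2,4,3,1,0,0,0],
[0,0,1,0,1,4,3,5,0,2,0,0],
[0,0,1,1,2,1,0,0,0,0,0,0],
[0,0,1,0,1,0,0,0,0,0,0,0]]
def TN9 : List (List ℕ) := [
[0,0,0,0,0,0,0,0,0,0,0,0],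
[0,0,0,0,0,0,5,0,0,0,0,0],
[0,0,6,5,1,2,3,0,5,2,0,0],
[0,1,5,1,7,3,5,4,4,0,0,0],
[0,0,1,2,6,1,8,6,4,5,0,0],
[0,2,4,2,3,0,7,0,2,2,5,0],
[0,0,0,3,2,2,5,1,2,5,1,0],
[0,1,5,4,1,2,2,4,3,0,1,0],
[0,5,4,3,4,2,4,3,2,0,1,0],
[0,0,1,0,1,4,3,5,0,2,0,0],
[0,0,1,1,2,1,0,0,0,0,0,0],
[0,0,1,0,1,0,0,0,0,0,0,0]]
def TN10 : List (List ℕ) := [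
[0,0,0,0,0,0,0,0,0,0,0,0],
[0,1,1,1,0,0,5,0,0,0,0,0],
[0,0,0,7,2,3,3,0,5,2,0,0],
[0,2,5,3,2,6,7,6,5,0,0,0],
[0,0,1,3,0,4,3,2,5,5,0,0],
[0,2,4,3,3,2,2,2,3,2,5,0],
[0,0,0,3,2,3,5,2,2,5,1,0],
[0,1,5,4,1,2,2,4,3,0,1,0],
[0,5,4,3,4,2,4,3,2,0,1,0],
[0,0,1,0,1,4,3,5,0,2,0,0],
[0,0,1,1,2,1,0,0,0,0,0,0],
[0,0,1,0,1,0,0,0,0,0,0,0]]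
def TN11 : List (List ℕ) := [
[0,0,0,0,0,0,0,0,0,0,0,0],
[0,1,2,2,1,0,5,0,0,0,0,0],
[0,0,0,1,4,5,6,2,6,2,0,0],
[0,2,6,3,3,0,2,1,6,0,0,0],
[0,0,1,3,1,5,5,3,6,5,0,0],
[0,2,4,3,3,2,2,2,3,2,5,0],
[0,0,0,3,2,3,5,2,2,5,1,0],
[0,1,5,4,1,2,2,4,3,0,1,0],
[0,5,4,3,4,2,4,3,2,0,1,0],
[0,0,1,0,1,4,3,5,0,2,0,0],
[0,0,1,1,2,1,0,0,0,0,0,0],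
[0,0,1,0,1,0,0,0,0,0,0,0]]
def TN12 : List (List ℕ) := [
[0,0,0,0,0,0,0,0,0,0,0,0],
[0,1,2,2,1,1,6,2,1,1,0,0],
[0,1,1,2,4,5,0,4,1,4,0,0],
[0,2,0,4,3,1,2,4,1,3,0,0],
[0,1,1,4,1,5,5,4,0,7,0,0],
[0,2,4,3,3,2,2,3,3,3,5,0],
[0,0,0,3,2,3,5,2,2,5,1,0],
[0,1,5,4,1,2,2,4,3,0,1,0],
[0,5,4,3,4,2,4,3,2,0,1,0],
[0,0,1,0,1,4,3,5,0,2,0,0],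
[0,0,1,1,2,1,0,0,0,0,0,0],
[0,0,1,0,1,0,0,0,0,0,0,0]]
def TW0 : List (List ℕ) := [
[0,0,0,0,0,0,0,0,0,0,0,0],
[0,0,0,0,0,0,5,0,0,0,0,0],
[0,0,5,4,0,2,3,0,5,2,0,0],
[0,0,3,5,4,2,4,4,4,0,0,0],
[0,0,5,5,1,5,5,4,2,4,0,0],
[0,0,2,5,4,3,3,4,5,0,5,0],
[0,0,5,0,4,3,0,5,5,2,0,0],
[0,0,5,2,5,5,4,2,2,5,0,0],
[0,6,3,0,1,5,2,2,1,0,0,0],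
[0,0,0,5,4,3,2,5,0,2,0,0],
[0,0,0,5,0,0,0,0,0,0,0,0],
[0,0,0,0,0,0,0,0,0,0,0,0]]
def TW1 : List (List ℕ) := [
[0,0,0,0,0,0,0,0,0,0,0,0],
[0,0,0,0,0,0,5,0,0,0,0,0],
[0,0,5,4,0,2,3,0,5,2,0,0],
[0,0,3,5,4,2,4,4,4,0,0,0],
[0,0,5,5,1,5,5,4,2,4,0,0],
[0,0,2,5,4,3,3,4,5,0,5,0],
[0,0,5,0,4,3,0,5,5,2,0,0],
[1,1,6,2,5,5,4,2,2,5,0,0],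
[0,0,4,0,1,5,2,2,1,0,0,0],
[1,0,1,5,4,3,2,5,0,2,0,0],
[0,0,0,5,0,0,0,0,0,0,0,0],
[0,0,0,0,0,0,0,0,0,0,0,0]]
def TW2 : List (List ℕ) := [
[0,0,0,0,0,0,0,0,0,0,0,0],
[0,0,0,0,0,0,5,0,0,0,0,0],
[0,0,5,4,0,2,3,0,5,2,0,0],
[0,0,3,5,4,2,4,4,4,0,0,0],
[0,0,5,5,1,5,5,4,2,4,0,0],
[0,0,2,5,4,3,3,4,5,0,5,0],
[0,1,6,1,4,3,0,5,5,2,0,0],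
[1,1,0,3,5,5,4,2,2,5,0,0],
[0,1,4,1,1,5,2,2,1,0,0,0],
[1,0,1,5,4,3,2,5,0,2,0,0],
[0,0,0,5,0,0,0,0,0,0,0,0],
[0,0,0,0,0,0,0,0,0,0,0,0]]
def TW3 : List (List ℕ) := [
[0,0,0,0,0,0,0,0,0,0,0,0],
[0,0,0,0,0,0,5,0,0,0,0,0],
[0,0,5,4,0,2,3,0,5,2,0,0],
[0,0,3,5,4,2,4,4,4,0,0,0],
[0,0,5,5,1,5,5,4,2,4,0,0],
[0,1,3,6,4,3,3,4,5,0,5,0],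
[0,1,0,2,4,3,0,5,5,2,0,0],
[1,2,0,4,5,5,4,2,2,5,0,0],
[0,1,4,1,1,5,2,2,1,0,0,0],
[1,0,1,5,4,3,2,5,0,2,0,0],
[0,0,0,5,0,0,0,0,0,0,0,0],
[0,0,0,0,0,0,0,0,0,0,0,0]]
def TW4 : List (List ℕ) := [
[0,0,0,0,0,0,0,0,0,0,0,0],
[0,0,0,0,0,0,5,0,0,0,0,0],
[0,0,5,4,0,2,3,0,5,2,0,0],
[0,0,3,5,4,2,4,4,4,0,0,0],
[0,0,6,6,2,5,5,4,2,4,0,0],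
[0,1,3,0,5,3,3,4,5,0,5,0],
[0,1,1,2,5,3,0,5,5,2,0,0],
[1,2,0,4,5,5,4,2,2,5,0,0],
[0,1,4,1,1,5,2,2,1,0,0,0],
[1,0,1,5,4,3,2,5,0,2,0,0],
[0,0,0,5,0,0,0,0,0,0,0,0],
[0,0,0,0,0,0,0,0,0,0,0,0]]
def TW5 : List (List ℕ) := [
[0,0,0,0,0,0,0,0,0,0,0,0],
[0,0,0,0,0,0,5,0,0,0,0,0],
[0,0,5,4,0,2,3,0,5,2,0,0],
[0,1,5,7,5,2,4,4,4,0,0,0],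
[0,0,0,1,3,5,5,4,2,4,0,0],
[0,2,4,1,6,3,3,4,5,0,5,0],
[0,1,1,2,5,3,0,5,5,2,0,0],
[1,2,0,4,5,5,4,2,2,5,0,0],
[0,1,4,1,1,5,2,2,1,0,0,0],
[1,0,1,5,4,3,2,5,0,2,0,0],
[0,0,0,5,0,0,0,0,0,0,0,0],
[0,0,0,0,0,0,0,0,0,0,0,0]]
def TW6 : List (List ℕ) := [
[0,0,0,0,0,0,0,0,0,0,0,0],
[0,0,0,0,0,0,5,0,0,0,0,0],
[0,0,6,5,1,2,3,0,5,2,0,0],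
[0,1,5,1,6,2,4,4,4,0,0,0],
[0,0,1,2,5,6,5,4,2,4,0,0],
[0,2,4,1,0,4,3,4,5,0,5,0],
[0,1,1,3,5,4,0,5,5,2,0,0],
[1,2,0,4,5,5,4,2,2,5,0,0],
[0,1,4,1,1,5,2,2,1,0,0,0],
[1,0,1,5,4,3,2,5,0,2,0,0],
[0,0,0,5,0,0,0,0,0,0,0,0],
[0,0,0,0,0,0,0,0,0,0,0,0]]
def TW7 : List (List ℕ) := [
[0,0,0,0,0,0,0,0,0,0,0,0],
[0,1,1,1,0,0,5,0,0,0,0,0],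
[0,0,0,7,2,3,3,0,5,2,0,0],
[0,2,5,2,1,4,5,4,4,0,0,0],
[0,0,1,3,5,1,6,4,2,4,0,0],
[0,2,4,1,1,4,4,4,5,0,5,0],
[0,1,1,3,5,4,0,5,5,2,0,0],
[1,2,0,4,5,5,4,2,2,5,0,0],
[0,1,4,1,1,5,2,2,1,0,0,0],
[1,0,1,5,4,3,2,5,0,2,0,0],
[0,0,0,5,0,0,0,0,0,0,0,0],
[0,0,0,0,0,0,0,0,0,0,0,0]]
def TW8 : List (List ℕ) := [
[0,0,0,0,0,0,0,0,0,0,0,0],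
[0,1,2,2,1,0,5,0,0,0,0,0],
[0,0,0,1,3,3,3,0,5,2,0,0],
[0,2,6,2,2,5,6,5,4,0,0,0],
[0,0,1,3,5,1,0,5,2,4,0,0],
[0,2,4,1,1,5,4,5,5,0,5,0],
[0,1,1,3,5,4,0,5,5,2,0,0],
[1,2,0,4,5,5,4,2,2,5,0,0],
[0,1,4,1,1,5,2,2,1,0,0,0],
[1,0,1,5,4,3,2,5,0,2,0,0],
[0,0,0,5,0,0,0,0,0,0,0,0],
[0,0,0,0,0,0,0,0,0,0,0,0]]
def TW9 : List (List ℕ) := [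
[0,0,0,0,0,0,0,0,0,0,0,0],
[0,1,2,2,1,0,5,0,0,0,0,0],
[0,1,1,2,3,4,4,1,5,2,0,0],
[0,2,0,3,2,5,0,6,4,0,0,0],
[0,1,1,4,5,2,0,6,2,4,0,0],
[0,2,4,1,1,5,4,5,5,0,5,0],
[0,1,1,3,5,4,0,5,5,2,0,0],
[1,2,0,4,5,5,4,2,2,5,0,0],
[0,1,4,1,1,5,2,2,1,0,0,0],
[1,0,1,5,4,3,2,5,0,2,0,0],
[0,0,0,5,0,0,0,0,0,0,0,0],
[0,0,0,0,0,0,0,0,0,0,0,0]]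
def TW10 : List (List ℕ) := [
[0,0,0,0,0,0,0,0,0,0,0,0],
[0,1,2,2,1,0,5,0,0,0,0,0],
[0,1,1,2,3,4,5,2,6,2,0,0],
[0,2,0,3,2,5,1,1,6,0,0,0],
[0,1,1,4,5,2,1,0,4,4,0,0],
[0,2,4,1,1,5,5,5,6,0,5,0],
[0,1,1,3,5,4,0,5,5,2,0,0],
[1,2,0,4,5,5,4,2,2,5,0,0],
[0,1,4,1,1,5,2,2,1,0,0,0],
[1,0,1,5,4,3,2,5,0,2,0,0],
[0,0,0,5,0,0,0,0,0,0,0,0],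
[0,0,0,0,0,0,0,0,0,0,0,0]]
def TW11 : List (List ℕ) := [
[0,0,0,0,0,0,0,0,0,0,0,0],
[0,1,2,2,1,0,5,1,1,1,0,0],
[0,1,1,2,3,4,5,3,1,4,0,0],
[0,2,0,3,2,5,1,2,0,2,0,0],
[0,1,1,4,5,2,1,2,5,6,0,0],
[0,2,4,1,1,5,5,5,0,1,5,0],
[0,1,1,3,5,4,0,6,5,3,0,0],
[1,2,0,4,5,5,4,2,2,5,0,0],
[0,1,4,1,1,5,2,2,1,0,0,0],
[1,0,1,5,4,3,2,5,0,2,0,0],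
[0,0,0,5,0,0,0,0,0,0,0,0],
[0,0,0,0,0,0,0,0,0,0,0,0]]
def TW12 : List (List ℕ) := [
[0,0,0,0,0,0,0,0,0,0,0,0],
[0,1,2,2,1,0,5,1,1,1,0,0],
[0,1,1,2,3,4,5,3,1,4,0,0],
[0,2,0,3,2,5,1,2,1,3,1,0],
[0,1,1,4,5,2,1,2,5,0,1,0],
[0,2,4,1,1,5,6,6,2,1,6,0],
[0,1,1,3,5,4,0,0,6,3,0,0],
[1,2,0,4,5,5,5,2,3,5,0,0],
[0,1,4,1,1,5,2,2,1,0,0,0],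
[1,0,1,5,4,3,2,5,0,2,0,0],
[0,0,0,5,0,0,0,0,0,0,0,0],
[0,0,0,0,0,0,0,0,0,0,0,0]]
def LN : List (List (List ℕ)) := [TN0,TN1,TN2,TN3,TN4,TN5,TN6,TN7,TN8,TN9,TN10,TN11,TN12]
def LW : List (List (List ℕ)) := [TW0,TW1,TW2,TW3,TW4,TW5,TW6,TW7,TW8,TW9,TW10,TW11,TW12]

lemma stepN0 : F NN (ofTbl TN0) = ofTbl TN1 :=
  step_eq _ _ (by decide) (by decide)
lemma stepN1 : F NN (ofTbl TN1) = ofTbl TN2 :=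
  step_eq _ _ (by decide) (by decide)
lemma stepN2 : F NN (ofTbl TN2) = ofTbl TN3 :=
  step_eq _ _ (by decide) (by decide)
lemma stepN3 : F NN (ofTbl TN3) = ofTbl TN4 :=
  step_eq _ _ (by decide) (by decide)
lemma stepN4 : F NN (ofTbl TN4) = ofTbl TN5 :=
  step_eq _ _ (by decide) (by decide)
lemma stepN5 : F NN (ofTbl TN5) = ofTbl TN6 :=
  step_eq _ _ (by decide) (by decide)
lemma stepN6 : F NN (ofTbl TN6) = ofTbl TN7 :=
  step_eq _ _ (by decide) (by decide)
lemma stepN7 : F NN (ofTbl TN7) = ofTbl TN8 :=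
  step_eq _ _ (by decide) (by decide)
lemma stepN8 : F NN (ofTbl TN8) = ofTbl TN9 :=
  step_eq _ _ (by decide) (by decide)
lemma stepN9 : F NN (ofTbl TN9) = ofTbl TN10 :=
  step_eq _ _ (by decide) (by decide)
lemma stepN10 : F NN (ofTbl TN10) = ofTbl TN11 :=
  step_eq _ _ (by decide) (by decide)
lemma stepN11 : F NN (ofTbl TN11) = ofTbl TN12 :=
  step_eq _ _ (by decide) (by decide)
lemma stepW0 : F NN (ofTbl TW0) = ofTbl TW1 :=
  step_eq _ _ (by decide) (by decide)
lemma stepW1 : F NN (ofTbl TW1) = ofTbl TW2 :=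
  step_eq _ _ (by decide) (by decide)
lemma stepW2 : F NN (ofTbl TW2) = ofTbl TW3 :=
  step_eq _ _ (by decide) (by decide)
lemma stepW3 : F NN (ofTbl TW3) = ofTbl TW4 :=
  step_eq _ _ (by decide) (by decide)
lemma stepW4 : F NN (ofTbl TW4) = ofTbl TW5 :=
  step_eq _ _ (by decide) (by decide)
lemma stepW5 : F NN (ofTbl TW5) = ofTbl TW6 :=
  step_eq _ _ (by decide) (by decide)
lemma stepW6 : F NN (ofTbl TW6) = ofTbl TW7 :=
  step_eq _ _ (by decide) (by decide)
lemma stepW7 : F NN (ofTbl TW7) = ofTbl TW8 :=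
  step_eq _ _ (by decide) (by decide)
lemma stepW8 : F NN (ofTbl TW8) = ofTbl TW9 :=
  step_eq _ _ (by decide) (by decide)
lemma stepW9 : F NN (ofTbl TW9) = ofTbl TW10 :=
  step_eq _ _ (by decide) (by decide)
lemma stepW10 : F NN (ofTbl TW10) = ofTbl TW11 :=
  step_eq _ _ (by decide) (by decide)
lemma stepW11 : F NN (ofTbl TW11) = ofTbl TW12 :=
  step_eq _ _ (by decide) (by decide)

lemma itN0 : (F NN)^[0] (ofTbl TN0) = ofTbl TN0 := rfl
lemma itN1 : (F NN)^[1] (ofTbl TN0) = ofTbl TN1 := by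
  rw [Function.iterate_succ_apply', itN0, stepN0]
lemma itN2 : (F NN)^[2] (ofTbl TN0) = ofTbl TN2 := by
  rw [Function.iterate_succ_apply', itN1, stepN1]
lemma itN3 : (F NN)^[3] (ofTbl TN0) = ofTbl TN3 := by
  rw [Function.iterate_succ_apply', itN2, stepN2]
lemma itN4 : (F NN)^[4] (ofTbl TN0) = ofTbl TN4 := by
  rw [Function.iterate_succ_apply', itN3, stepN3]
lemma itN5 : (F NN)^[5] (ofTbl TN0) = ofTbl TN5 := by
  rw [Function.iterate_succ_apply', itN4, stepN4]
lemma itN6 : (F NN)^[6] (ofTbl TN0) = ofTbl TN6 := by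
  rw [Function.iterate_succ_apply', itN5, stepN5]
lemma itN7 : (F NN)^[7] (ofTbl TN0) = ofTbl TN7 := by
  rw [Function.iterate_succ_apply', itN6, stepN6]
lemma itN8 : (F NN)^[8] (ofTbl TN0) = ofTbl TN8 := by
  rw [Function.iterate_succ_apply', itN7, stepN7]
lemma itN9 : (F NN)^[9] (ofTbl TN0) = ofTbl TN9 := by
  rw [Function.iterate_succ_apply', itN8, stepN8]
lemma itN10 : (F NN)^[10] (ofTbl TN0) = ofTbl TN10 := by
  rw [Function.iterate_succ_apply', itN9, stepN9]
lemma itN11 : (F NN)^[11] (ofTbl TN0) = ofTbl TN11 := by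
  rw [Function.iterate_succ_apply', itN10, stepN10]
lemma itN12 : (F NN)^[12] (ofTbl TN0) = ofTbl TN12 := by
  rw [Function.iterate_succ_apply', itN11, stepN11]
lemma itW0 : (F NN)^[0] (ofTbl TW0) = ofTbl TW0 := rfl
lemma itW1 : (F NN)^[1] (ofTbl TW0) = ofTbl TW1 := by
  rw [Function.iterate_succ_apply', itW0, stepW0]
lemma itW2 : (F NN)^[2] (ofTbl TW0) = ofTbl TW2 := by
  rw [Function.iterate_succ_apply', itW1, stepW1]
lemma itW3 : (F NN)^[3] (ofTbl TW0) = ofTbl TW3 := by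
  rw [Function.iterate_succ_apply', itW2, stepW2]
lemma itW4 : (F NN)^[4] (ofTbl TW0) = ofTbl TW4 := by
  rw [Function.iterate_succ_apply', itW3, stepW3]
lemma itW5 : (F NN)^[5] (ofTbl TW0) = ofTbl TW5 := by
  rw [Function.iterate_succ_apply', itW4, stepW4]
lemma itW6 : (F NN)^[6] (ofTbl TW0) = ofTbl TW6 := by
  rw [Function.iterate_succ_apply', itW5, stepW5]
lemma itW7 : (F NN)^[7] (ofTbl TW0) = ofTbl TW7 := by
  rw [Function.iterate_succ_apply', itW6, stepW6]
lemma itW8 : (F NN)^[8] (ofTbl TW0) = ofTbl TW8 := by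
  rw [Function.iterate_succ_apply', itW7, stepW7]
lemma itW9 : (F NN)^[9] (ofTbl TW0) = ofTbl TW9 := by
  rw [Function.iterate_succ_apply', itW8, stepW8]
lemma itW10 : (F NN)^[10] (ofTbl TW0) = ofTbl TW10 := by
  rw [Function.iterate_succ_apply', itW9, stepW9]
lemma itW11 : (F NN)^[11] (ofTbl TW0) = ofTbl TW11 := by
  rw [Function.iterate_succ_apply', itW10, stepW10]
lemma itW12 : (F NN)^[12] (ofTbl TW0) = ofTbl TW12 := by
  rw [Function.iterate_succ_apply', itW11, stepW11]


lemma addN : ofTbl Tg + one (2,9) = ofTbl TN0 :=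
  add_one_eq _ _ _ (by decide) (by decide)
lemma addW : ofTbl Tg + one (0,7) = ofTbl TW0 :=
  add_one_eq _ _ _ (by decide) (by decide)

lemma iterN : ∀ t ≤ 12, (F NN)^[t] (ofTbl TN0) = ofTbl (LN.getD t []) := by
  intro t ht
  interval_cases t
  exacts [itN0, itN1, itN2, itN3, itN4, itN5, itN6, itN7, itN8, itN9, itN10, itN11, itN12]

lemma iterW : ∀ t ≤ 12, (F NN)^[t] (ofTbl TW0) = ofTbl (LW.getD t []) := by
  intro t ht
  interval_cases t
  exacts [itW0, itW1, itW2, itW3, itW4, itW5, itW6, itW7, itW8, itW9, itW10, itW11, itW12]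

lemma sideN : ∀ t' < 13, ∀ j < 10,
    ofTbl (LN.getD t' []) (0, ((j:ℕ):ℤ)) < 6 ∧ ofTbl (LN.getD t' []) (9, ((j:ℕ):ℤ)) < 6 := by
  decide

lemma sideW : ∀ t' < 13, ∀ j < 10,
    ofTbl (LW.getD t' []) (((j:ℕ):ℤ), 0) < 6 ∧ ofTbl (LW.getD t' []) (((j:ℕ):ℤ), 9) < 6 := by
  decide

lemma suppTg : ∀ i < 12, ∀ j < 12,
    (1 ≤ i ∧ i ≤ 10 ∧ 1 ≤ j ∧ j ≤ 10) ∨ ofTbl Tg (((i:ℕ):ℤ) - 1, ((j:ℕ):ℤ) - 1) = 0 := by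
  decide

theorem main : IsTimedCrossoverGate NN 10 10 12 (ofTbl Tg) (2,9) (9,4) (5,0) (0,7) := by
  refine ⟨?_, ?_, ?_, ?_, ?_, ?_, ?_, ?_, ?_, ?_, 3, 2, 1, 0, ?_, ?_, ?_, ?_,
    by decide, by decide, by decide, ?_, ?_, ?_, ?_⟩
  · -- stable
    intro p
    rw [theta_eq]
    exact ofTbl_lt_all Tg (by decide) p
  · -- support
    rintro ⟨a, b⟩ hp
    have hp' : ¬(0 ≤ a ∧ a < 10 ∧ 0 ≤ b ∧ b < 10) := hp
    by_cases hin : InBox (a, b)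
    · obtain ⟨ha1, ha2, hb1, hb2⟩ := hin
      simp only at ha1 ha2 hb1 hb2
      have e1 : (((a+1).toNat : ℕ) : ℤ) - 1 = a := by omega
      have e2 : (((b+1).toNat : ℕ) : ℤ) - 1 = b := by omega
      rcases suppTg (a+1).toNat (by omega) (b+1).toNat (by omega) with h | h
      · exfalso; apply hp'; omega
      · rwa [e1, e2] at h
    · exact ofTbl_out _ hin
  · exact ⟨by norm_num, by norm_num, by norm_num, by norm_num⟩
  · exact ⟨by norm_num, by norm_num, by norm_num, by norm_num⟩
  · exact ⟨by norm_num, by norm_num, by norm_num, by norm_num⟩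
  · exact ⟨by norm_num, by norm_num, by norm_num, by norm_num⟩
  · norm_num [Corners, Prod.ext_iff]
  · norm_num [Corners, Prod.ext_iff]
  · norm_num [Corners, Prod.ext_iff]
  · norm_num [Corners, Prod.ext_iff]
  · -- n ∈ side 3
    have hs : side 10 10 3 = {p : Cell | p.2 = ((10:ℕ):ℤ) - 1 ∧ 0 ≤ p.1 ∧ p.1 < ((10:ℕ):ℤ)} := by
      unfold side; rw [if_neg (by decide), if_neg (by decide), if_neg (by decide)]
    rw [hs]; exact ⟨by norm_num, by norm_num, by norm_num⟩
  · -- e ∈ side 2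
    have hs : side 10 10 2 = {p : Cell | p.1 = ((10:ℕ):ℤ) - 1 ∧ 0 ≤ p.2 ∧ p.2 < ((10:ℕ):ℤ)} := by
      unfold side; rw [if_neg (by decide), if_neg (by decide), if_pos (by decide)]
    rw [hs]; exact ⟨by norm_num, by norm_num, by norm_num⟩
  · -- s ∈ side 1
    have hs : side 10 10 1 = {p : Cell | p.2 = 0 ∧ 0 ≤ p.1 ∧ p.1 < ((10:ℕ):ℤ)} := by
      unfold side; rw [if_neg (by decide), if_pos (by decide)]
    rw [hs]; exact ⟨by norm_num, by norm_num, by norm_num⟩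
  · -- w ∈ side 0
    have hs : side 10 10 0 = {p : Cell | p.1 = 0 ∧ 0 ≤ p.2 ∧ p.2 < ((10:ℕ):ℤ)} := by
      unfold side; rw [if_pos (by decide)]
    rw [hs]; exact ⟨by norm_num, by norm_num, by norm_num⟩
  · -- arrival N
    rw [addN, itN12, theta_eq]
    decide
  · -- safety N
    rintro ⟨a, b⟩ hp t ht
    rw [addN, iterN t ht, theta_eq]
    simp only [side, Set.mem_union, Set.mem_setOf_eq] at hp
    norm_num at hp
    rcases hp with ⟨h1, h2, h3⟩ | ⟨h1, h2, h3⟩ <;> subst h1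
    · obtain ⟨j, hj, rfl⟩ : ∃ j : ℕ, j < 10 ∧ ((j:ℕ):ℤ) = b := ⟨b.toNat, by omega, by omega⟩
      exact (sideN t (by omega) j hj).1
    · obtain ⟨j, hj, rfl⟩ : ∃ j : ℕ, j < 10 ∧ ((j:ℕ):ℤ) = b := ⟨b.toNat, by omega, by omega⟩
      exact (sideN t (by omega) j hj).2
  · -- arrival W
    rw [addW, itW12, theta_eq]
    decide
  · -- safety W
    rintro ⟨a, b⟩ hp t ht
    rw [addW, iterW t ht, theta_eq]
    simp only [side, Set.mem_union, Set.mem_setOf_eq] at hp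
    norm_num at hp
    rcases hp with ⟨h1, h2, h3⟩ | ⟨h1, h2, h3⟩ <;> subst h1
    · obtain ⟨j, hj, rfl⟩ : ∃ j : ℕ, j < 10 ∧ ((j:ℕ):ℤ) = a := ⟨a.toNat, by omega, by omega⟩
      exact (sideW t (by omega) j hj).2
    · obtain ⟨j, hj, rfl⟩ : ∃ j : ℕ, j < 10 ∧ ((j:ℕ):ℤ) = a := ⟨a.toNat, by omega, by omega⟩
      exact (sideW t (by omega) j hj).1


theorem nbhd111_timed_crossover :
    ∃ g n e s w, IsTimedCrossoverGate
      ({(1,0),(0,-1),(-1,1),(1,1),(1,-1),(-1,-1)} : Finset Cell) 10 10 12 g n e s w :=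
  ⟨ofTbl Tg, (2,9), (9,4), (5,0), (0,7), main⟩

end Sandpile
end

section
/- The neighborhood N = {(1,0), (0,−1), (−1,0), (−1,1), (1,1), (1,−1), (−1,−1)} (neighborhood 127 in the 8-bit numbering of subsets of the Moore neighborhood, i.e. the Moore neighborhood minus (0,1)) admits a timed crossover gate of size 10 × 10 and delay 12. -/
namespace Sandpile

/-! ### Auxiliary machinery for the explicit gate -/

def N127 : Finset Cell := {(1,0),(0,-1),(-1,0),(-1,1),(1,1),(1,-1),(-1,-1)}

lemma θN : θ N127 = 7 := by decide

/-- Configuration given by a table of rows; row `y` (0 ≤ y ≤ 10) lists the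
values at cells `(-1,y),…,(9,y)`. Zero outside the box. -/
def tbl (rows : List (List ℕ)) : Config := fun p =>
  if -1 ≤ p.1 ∧ p.1 ≤ 9 ∧ 0 ≤ p.2 ∧ p.2 ≤ 10 then
    ((rows.getD p.2.toNat []).getD (p.1 + 1).toNat 0)
  else 0

lemma tbl_outside (rows : List (List ℕ)) (q : Cell)
    (h : q.1 < -1 ∨ 9 < q.1 ∨ q.2 < 0 ∨ 10 < q.2) : tbl rows q = 0 := by
  have : ¬(-1 ≤ q.1 ∧ q.1 ≤ 9 ∧ 0 ≤ q.2 ∧ q.2 ≤ 10) := by omega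
  simp [tbl, this]

/-- The decide box: the support box enlarged by one. -/
noncomputable def B2 : Finset Cell := (Finset.Icc (-2 : ℤ) 10) ×ˢ (Finset.Icc (-1 : ℤ) 11)

lemma F_outside (c : Config)
    (hc : ∀ q : Cell, (q.1 < -1 ∨ 9 < q.1 ∨ q.2 < 0 ∨ 10 < q.2) → c q = 0)
    (p : Cell) (hp : p.1 < -2 ∨ 10 < p.1 ∨ p.2 < -1 ∨ 11 < p.2) :
    F N127 c p = 0 := by
  have h0 : c p = 0 := hc p (by omega)
  have hsum : ∀ p' ∈ N127, (if θ N127 ≤ c (p - p') then 1 else 0) = 0 := by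
    intro p' hp'
    have hq : c (p - p') = 0 := by
      apply hc
      simp only [N127, Finset.mem_insert, Finset.mem_singleton] at hp'
      rcases hp' with h|h|h|h|h|h|h <;> subst h <;>
        simp only [Prod.fst_sub, Prod.snd_sub] <;> omega
    rw [hq, θN]
    simp
  unfold F
  rw [h0, Finset.sum_congr rfl hsum]
  simp

lemma step_tbl (A B : List (List ℕ))
    (h : ∀ q ∈ B2, F N127 (tbl A) q = tbl B q) : F N127 (tbl A) = tbl B := by
  funext p
  by_cases h1 : -2 ≤ p.1 ∧ p.1 ≤ 10 ∧ -1 ≤ p.2 ∧ p.2 ≤ 11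
  · exact h p (Finset.mem_product.mpr
      ⟨Finset.mem_Icc.mpr ⟨h1.1, h1.2.1⟩, Finset.mem_Icc.mpr ⟨h1.2.2.1, h1.2.2.2⟩⟩)
  · rw [F_outside (tbl A) (tbl_outside A) p (by omega),
        tbl_outside B p (by omega)]

/-- The 20 cells of the W and E sides. -/
noncomputable def WEfin : Finset Cell := (({0, 9} : Finset ℤ) ×ˢ Finset.Icc (0 : ℤ) 9)
/-- The 20 cells of the N and S sides. -/
noncomputable def NSfin : Finset Cell := (Finset.Icc (0 : ℤ) 9 ×ˢ ({0, 9} : Finset ℤ))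

lemma memWE {p : Cell} (hp : p ∈ side 10 10 0 ∪ side 10 10 2) : p ∈ WEfin := by
  have h02 : ((10 : ℕ) : ℤ) = 10 := by norm_num
  rcases hp with h | h
  · rw [side, if_pos rfl] at h
    obtain ⟨h1, h2, h3⟩ := h
    rw [h02] at h3
    exact Finset.mem_product.mpr ⟨by simp [h1], Finset.mem_Icc.mpr ⟨h2, by omega⟩⟩
  · rw [side, if_neg (by decide), if_neg (by decide), if_pos rfl] at h
    obtain ⟨h1, h2, h3⟩ := h
    rw [h02] at h1 h3
    have h9 : p.1 = 9 := by omega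
    exact Finset.mem_product.mpr ⟨by simp [h9], Finset.mem_Icc.mpr ⟨h2, by omega⟩⟩

lemma memNS {p : Cell} (hp : p ∈ side 10 10 3 ∪ side 10 10 1) : p ∈ NSfin := by
  have h02 : ((10 : ℕ) : ℤ) = 10 := by norm_num
  rcases hp with h | h
  · rw [side, if_neg (by decide), if_neg (by decide), if_neg (by decide)] at h
    obtain ⟨h1, h2, h3⟩ := h
    rw [h02] at h1 h3
    have h9 : p.2 = 9 := by omega
    exact Finset.mem_product.mpr ⟨Finset.mem_Icc.mpr ⟨h2, by omega⟩, by simp [h9]⟩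
  · rw [side, if_neg (by decide), if_pos rfl] at h
    obtain ⟨h1, h2, h3⟩ := h
    rw [h02] at h3
    exact Finset.mem_product.mpr ⟨Finset.mem_Icc.mpr ⟨h2, by omega⟩, by simp [h1]⟩


def gT : List (List ℕ) := [[0, 0, 0, 0, 0, 6, 0, 0, 0, 0, 0],
   [0, 6, 6, 0, 0, 5, 0, 0, 0, 0, 6],
   [0, 6, 5, 0, 0, 6, 3, 0, 0, 6, 0],
   [0, 0, 0, 6, 6, 3, 6, 6, 0, 6, 0],
   [0, 0, 0, 0, 5, 4, 0, 0, 6, 0, 0],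
   [0, 0, 0, 0, 6, 5, 0, 0, 0, 0, 0],
   [0, 0, 0, 0, 0, 6, 0, 0, 0, 0, 0],
   [0, 0, 0, 0, 0, 0, 5, 0, 0, 0, 0],
   [0, 0, 0, 0, 0, 0, 6, 6, 0, 0, 0],
   [0, 0, 0, 0, 0, 0, 6, 0, 0, 0, 0],
   [0, 0, 0, 0, 0, 0, 0, 0, 0, 0, 0]]

def R0 : List (List ℕ) := [[0, 0, 0, 0, 0, 6, 0, 0, 0, 0, 0],
   [0, 6, 6, 0, 0, 5, 0, 0, 0, 0, 6],
   [0, 6, 5, 0, 0, 6, 3, 0, 0, 6, 0],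
   [0, 0, 0, 6, 6, 3, 6, 6, 0, 6, 0],
   [0, 0, 0, 0, 5, 4, 0, 0, 6, 0, 0],
   [0, 0, 0, 0, 6, 5, 0, 0, 0, 0, 0],
   [0, 0, 0, 0, 0, 6, 0, 0, 0, 0, 0],
   [0, 0, 0, 0, 0, 0, 5, 0, 0, 0, 0],
   [0, 0, 0, 0, 0, 0, 6, 6, 0, 0, 0],
   [0, 0, 0, 0, 0, 0, 7, 0, 0, 0, 0],
   [0, 0, 0, 0, 0, 0, 0, 0, 0, 0, 0]]

def R1 : List (List ℕ) := [[0, 0, 0, 0, 0, 6, 0, 0, 0, 0, 0],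
   [0, 6, 6, 0, 0, 5, 0, 0, 0, 0, 6],
   [0, 6, 5, 0, 0, 6, 3, 0, 0, 6, 0],
   [0, 0, 0, 6, 6, 3, 6, 6, 0, 6, 0],
   [0, 0, 0, 0, 5, 4, 0, 0, 6, 0, 0],
   [0, 0, 0, 0, 6, 5, 0, 0, 0, 0, 0],
   [0, 0, 0, 0, 0, 6, 0, 0, 0, 0, 0],
   [0, 0, 0, 0, 0, 0, 5, 0, 0, 0, 0],
   [0, 0, 0, 0, 0, 1, 7, 7, 0, 0, 0],
   [0, 0, 0, 0, 0, 1, 0, 1, 0, 0, 0],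
   [0, 0, 0, 0, 0, 1, 0, 1, 0, 0, 0]]

def R2 : List (List ℕ) := [[0, 0, 0, 0, 0, 6, 0, 0, 0, 0, 0],
   [0, 6, 6, 0, 0, 5, 0, 0, 0, 0, 6],
   [0, 6, 5, 0, 0, 6, 3, 0, 0, 6, 0],
   [0, 0, 0, 6, 6, 3, 6, 6, 0, 6, 0],
   [0, 0, 0, 0, 5, 4, 0, 0, 6, 0, 0],
   [0, 0, 0, 0, 6, 5, 0, 0, 0, 0, 0],
   [0, 0, 0, 0, 0, 6, 0, 0, 0, 0, 0],
   [0, 0, 0, 0, 0, 1, 7, 2, 1, 0, 0],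
   [0, 0, 0, 0, 0, 2, 1, 1, 1, 0, 0],
   [0, 0, 0, 0, 0, 2, 1, 2, 1, 0, 0],
   [0, 0, 0, 0, 0, 1, 0, 1, 0, 0, 0]]

def R3 : List (List ℕ) := [[0, 0, 0, 0, 0, 6, 0, 0, 0, 0, 0],
   [0, 6, 6, 0, 0, 5, 0, 0, 0, 0, 6],
   [0, 6, 5, 0, 0, 6, 3, 0, 0, 6, 0],
   [0, 0, 0, 6, 6, 3, 6, 6, 0, 6, 0],
   [0, 0, 0, 0, 5, 4, 0, 0, 6, 0, 0],
   [0, 0, 0, 0, 6, 5, 0, 0, 0, 0, 0],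
   [0, 0, 0, 0, 0, 7, 1, 1, 0, 0, 0],
   [0, 0, 0, 0, 0, 2, 0, 3, 1, 0, 0],
   [0, 0, 0, 0, 0, 3, 1, 2, 1, 0, 0],
   [0, 0, 0, 0, 0, 2, 1, 2, 1, 0, 0],
   [0, 0, 0, 0, 0, 1, 0, 1, 0, 0, 0]]

def R4 : List (List ℕ) := [[0, 0, 0, 0, 0, 6, 0, 0, 0, 0, 0],
   [0, 6, 6, 0, 0, 5, 0, 0, 0, 0, 6],
   [0, 6, 5, 0, 0, 6, 3, 0, 0, 6, 0],
   [0, 0, 0, 6, 6, 3, 6, 6, 0, 6, 0],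
   [0, 0, 0, 0, 5, 4, 0, 0, 6, 0, 0],
   [0, 0, 0, 0, 7, 6, 1, 0, 0, 0, 0],
   [0, 0, 0, 0, 1, 0, 2, 1, 0, 0, 0],
   [0, 0, 0, 0, 1, 2, 1, 3, 1, 0, 0],
   [0, 0, 0, 0, 0, 3, 1, 2, 1, 0, 0],
   [0, 0, 0, 0, 0, 2, 1, 2, 1, 0, 0],
   [0, 0, 0, 0, 0, 1, 0, 1, 0, 0, 0]]

def R5 : List (List ℕ) := [[0, 0, 0, 0, 0, 6, 0, 0, 0, 0, 0],
   [0, 6, 6, 0, 0, 5, 0, 0, 0, 0, 6],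
   [0, 6, 5, 0, 0, 6, 3, 0, 0, 6, 0],
   [0, 0, 0, 6, 6, 3, 6, 6, 0, 6, 0],
   [0, 0, 0, 1, 6, 5, 0, 0, 6, 0, 0],
   [0, 0, 0, 1, 0, 7, 1, 0, 0, 0, 0],
   [0, 0, 0, 1, 1, 1, 2, 1, 0, 0, 0],
   [0, 0, 0, 0, 1, 2, 1, 3, 1, 0, 0],
   [0, 0, 0, 0, 0, 3, 1, 2, 1, 0, 0],
   [0, 0, 0, 0, 0, 2, 1, 2, 1, 0, 0],
   [0, 0, 0, 0, 0, 1, 0, 1, 0, 0, 0]]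

def R6 : List (List ℕ) := [[0, 0, 0, 0, 0, 6, 0, 0, 0, 0, 0],
   [0, 6, 6, 0, 0, 5, 0, 0, 0, 0, 6],
   [0, 6, 5, 0, 0, 6, 3, 0, 0, 6, 0],
   [0, 0, 0, 6, 6, 3, 6, 6, 0, 6, 0],
   [0, 0, 0, 1, 7, 6, 1, 0, 6, 0, 0],
   [0, 0, 0, 1, 1, 0, 2, 0, 0, 0, 0],
   [0, 0, 0, 1, 2, 1, 3, 1, 0, 0, 0],
   [0, 0, 0, 0, 1, 2, 1, 3, 1, 0, 0],
   [0, 0, 0, 0, 0, 3, 1, 2, 1, 0, 0],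
   [0, 0, 0, 0, 0, 2, 1, 2, 1, 0, 0],
   [0, 0, 0, 0, 0, 1, 0, 1, 0, 0, 0]]

def R7 : List (List ℕ) := [[0, 0, 0, 0, 0, 6, 0, 0, 0, 0, 0],
   [0, 6, 6, 0, 0, 5, 0, 0, 0, 0, 6],
   [0, 6, 5, 0, 0, 6, 3, 0, 0, 6, 0],
   [0, 0, 0, 7, 7, 4, 6, 6, 0, 6, 0],
   [0, 0, 0, 2, 0, 7, 1, 0, 6, 0, 0],
   [0, 0, 0, 2, 1, 1, 2, 0, 0, 0, 0],
   [0, 0, 0, 1, 2, 1, 3, 1, 0, 0, 0],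
   [0, 0, 0, 0, 1, 2, 1, 3, 1, 0, 0],
   [0, 0, 0, 0, 0, 3, 1, 2, 1, 0, 0],
   [0, 0, 0, 0, 0, 2, 1, 2, 1, 0, 0],
   [0, 0, 0, 0, 0, 1, 0, 1, 0, 0, 0]]

def R8 : List (List ℕ) := [[0, 0, 0, 0, 0, 6, 0, 0, 0, 0, 0],
   [0, 6, 6, 0, 0, 5, 0, 0, 0, 0, 6],
   [0, 6, 6, 2, 2, 7, 3, 0, 0, 6, 0],
   [0, 0, 1, 1, 2, 6, 7, 6, 0, 6, 0],
   [0, 0, 1, 3, 2, 1, 2, 0, 6, 0, 0],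
   [0, 0, 0, 2, 2, 1, 3, 0, 0, 0, 0],
   [0, 0, 0, 1, 2, 1, 3, 1, 0, 0, 0],
   [0, 0, 0, 0, 1, 2, 1, 3, 1, 0, 0],
   [0, 0, 0, 0, 0, 3, 1, 2, 1, 0, 0],
   [0, 0, 0, 0, 0, 2, 1, 2, 1, 0, 0],
   [0, 0, 0, 0, 0, 1, 0, 1, 0, 0, 0]]

def R9 : List (List ℕ) := [[0, 0, 0, 0, 0, 6, 0, 0, 0, 0, 0],
   [0, 6, 6, 0, 1, 6, 1, 0, 0, 0, 6],
   [0, 6, 6, 2, 3, 1, 5, 1, 0, 6, 0],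
   [0, 0, 1, 1, 3, 7, 1, 7, 0, 6, 0],
   [0, 0, 1, 3, 2, 2, 2, 1, 6, 0, 0],
   [0, 0, 0, 2, 2, 1, 3, 0, 0, 0, 0],
   [0, 0, 0, 1, 2, 1, 3, 1, 0, 0, 0],
   [0, 0, 0, 0, 1, 2, 1, 3, 1, 0, 0],
   [0, 0, 0, 0, 0, 3, 1, 2, 1, 0, 0],
   [0, 0, 0, 0, 0, 2, 1, 2, 1, 0, 0],
   [0, 0, 0, 0, 0, 1, 0, 1, 0, 0, 0]]

def R10 : List (List ℕ) := [[0, 0, 0, 0, 0, 6, 0, 0, 0, 0, 0],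
   [0, 6, 6, 0, 1, 6, 1, 0, 0, 0, 6],
   [0, 6, 6, 2, 4, 2, 7, 2, 1, 6, 0],
   [0, 0, 1, 1, 4, 0, 3, 0, 1, 6, 0],
   [0, 0, 1, 3, 3, 2, 4, 1, 7, 0, 0],
   [0, 0, 0, 2, 2, 1, 3, 0, 0, 0, 0],
   [0, 0, 0, 1, 2, 1, 3, 1, 0, 0, 0],
   [0, 0, 0, 0, 1, 2, 1, 3, 1, 0, 0],
   [0, 0, 0, 0, 0, 3, 1, 2, 1, 0, 0],
   [0, 0, 0, 0, 0, 2, 1, 2, 1, 0, 0],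
   [0, 0, 0, 0, 0, 1, 0, 1, 0, 0, 0]]

def R11 : List (List ℕ) := [[0, 0, 0, 0, 0, 6, 0, 0, 0, 0, 0],
   [0, 6, 6, 0, 1, 7, 2, 1, 0, 0, 6],
   [0, 6, 6, 2, 4, 3, 0, 3, 1, 6, 0],
   [0, 0, 1, 1, 4, 1, 3, 2, 2, 7, 0],
   [0, 0, 1, 3, 3, 2, 4, 2, 0, 1, 0],
   [0, 0, 0, 2, 2, 1, 3, 1, 0, 1, 0],
   [0, 0, 0, 1, 2, 1, 3, 1, 0, 0, 0],
   [0, 0, 0, 0, 1, 2, 1, 3, 1, 0, 0],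
   [0, 0, 0, 0, 0, 3, 1, 2, 1, 0, 0],
   [0, 0, 0, 0, 0, 2, 1, 2, 1, 0, 0],
   [0, 0, 0, 0, 0, 1, 0, 1, 0, 0, 0]]

def R12 : List (List ℕ) := [[0, 0, 0, 0, 1, 7, 1, 0, 0, 0, 0],
   [0, 6, 6, 0, 2, 0, 3, 1, 0, 0, 6],
   [0, 6, 6, 2, 5, 3, 1, 3, 2, 7, 1],
   [0, 0, 1, 1, 4, 1, 3, 2, 3, 0, 1],
   [0, 0, 1, 3, 3, 2, 4, 2, 1, 1, 1],
   [0, 0, 0, 2, 2, 1, 3, 1, 0, 1, 0],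
   [0, 0, 0, 1, 2, 1, 3, 1, 0, 0, 0],
   [0, 0, 0, 0, 1, 2, 1, 3, 1, 0, 0],
   [0, 0, 0, 0, 0, 3, 1, 2, 1, 0, 0],
   [0, 0, 0, 0, 0, 2, 1, 2, 1, 0, 0],
   [0, 0, 0, 0, 0, 1, 0, 1, 0, 0, 0]]

def S0 : List (List ℕ) := [[0, 0, 0, 0, 0, 6, 0, 0, 0, 0, 0],
   [0, 7, 6, 0, 0, 5, 0, 0, 0, 0, 6],
   [0, 6, 5, 0, 0, 6, 3, 0, 0, 6, 0],
   [0, 0, 0, 6, 6, 3, 6, 6, 0, 6, 0],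
   [0, 0, 0, 0, 5, 4, 0, 0, 6, 0, 0],
   [0, 0, 0, 0, 6, 5, 0, 0, 0, 0, 0],
   [0, 0, 0, 0, 0, 6, 0, 0, 0, 0, 0],
   [0, 0, 0, 0, 0, 0, 5, 0, 0, 0, 0],
   [0, 0, 0, 0, 0, 0, 6, 6, 0, 0, 0],
   [0, 0, 0, 0, 0, 0, 6, 0, 0, 0, 0],
   [0, 0, 0, 0, 0, 0, 0, 0, 0, 0, 0]]

def S1 : List (List ℕ) := [[1, 1, 1, 0, 0, 6, 0, 0, 0, 0, 0],
   [1, 0, 7, 0, 0, 5, 0, 0, 0, 0, 6],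
   [1, 6, 6, 0, 0, 6, 3, 0, 0, 6, 0],
   [0, 0, 0, 6, 6, 3, 6, 6, 0, 6, 0],
   [0, 0, 0, 0, 5, 4, 0, 0, 6, 0, 0],
   [0, 0, 0, 0, 6, 5, 0, 0, 0, 0, 0],
   [0, 0, 0, 0, 0, 6, 0, 0, 0, 0, 0],
   [0, 0, 0, 0, 0, 0, 5, 0, 0, 0, 0],
   [0, 0, 0, 0, 0, 0, 6, 6, 0, 0, 0],
   [0, 0, 0, 0, 0, 0, 6, 0, 0, 0, 0],
   [0, 0, 0, 0, 0, 0, 0, 0, 0, 0, 0]]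

def S2 : List (List ℕ) := [[1, 2, 2, 1, 0, 6, 0, 0, 0, 0, 0],
   [1, 1, 0, 1, 0, 5, 0, 0, 0, 0, 6],
   [1, 7, 6, 1, 0, 6, 3, 0, 0, 6, 0],
   [0, 0, 0, 6, 6, 3, 6, 6, 0, 6, 0],
   [0, 0, 0, 0, 5, 4, 0, 0, 6, 0, 0],
   [0, 0, 0, 0, 6, 5, 0, 0, 0, 0, 0],
   [0, 0, 0, 0, 0, 6, 0, 0, 0, 0, 0],
   [0, 0, 0, 0, 0, 0, 5, 0, 0, 0, 0],
   [0, 0, 0, 0, 0, 0, 6, 6, 0, 0, 0],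
   [0, 0, 0, 0, 0, 0, 6, 0, 0, 0, 0],
   [0, 0, 0, 0, 0, 0, 0, 0, 0, 0, 0]]

def S3 : List (List ℕ) := [[1, 2, 2, 1, 0, 6, 0, 0, 0, 0, 0],
   [2, 2, 1, 1, 0, 5, 0, 0, 0, 0, 6],
   [2, 0, 7, 1, 0, 6, 3, 0, 0, 6, 0],
   [1, 0, 1, 6, 6, 3, 6, 6, 0, 6, 0],
   [0, 0, 0, 0, 5, 4, 0, 0, 6, 0, 0],
   [0, 0, 0, 0, 6, 5, 0, 0, 0, 0, 0],
   [0, 0, 0, 0, 0, 6, 0, 0, 0, 0, 0],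
   [0, 0, 0, 0, 0, 0, 5, 0, 0, 0, 0],
   [0, 0, 0, 0, 0, 0, 6, 6, 0, 0, 0],
   [0, 0, 0, 0, 0, 0, 6, 0, 0, 0, 0],
   [0, 0, 0, 0, 0, 0, 0, 0, 0, 0, 0]]

def S4 : List (List ℕ) := [[1, 2, 2, 1, 0, 6, 0, 0, 0, 0, 0],
   [2, 3, 2, 2, 0, 5, 0, 0, 0, 0, 6],
   [2, 1, 0, 2, 0, 6, 3, 0, 0, 6, 0],
   [1, 1, 1, 7, 6, 3, 6, 6, 0, 6, 0],
   [0, 0, 0, 0, 5, 4, 0, 0, 6, 0, 0],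
   [0, 0, 0, 0, 6, 5, 0, 0, 0, 0, 0],
   [0, 0, 0, 0, 0, 6, 0, 0, 0, 0, 0],
   [0, 0, 0, 0, 0, 0, 5, 0, 0, 0, 0],
   [0, 0, 0, 0, 0, 0, 6, 6, 0, 0, 0],
   [0, 0, 0, 0, 0, 0, 6, 0, 0, 0, 0],
   [0, 0, 0, 0, 0, 0, 0, 0, 0, 0, 0]]

def S5 : List (List ℕ) := [[1, 2, 2, 1, 0, 6, 0, 0, 0, 0, 0],
   [2, 3, 2, 2, 0, 5, 0, 0, 0, 0, 6],
   [2, 1, 1, 3, 1, 6, 3, 0, 0, 6, 0],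
   [1, 1, 2, 0, 7, 3, 6, 6, 0, 6, 0],
   [0, 0, 1, 0, 6, 4, 0, 0, 6, 0, 0],
   [0, 0, 0, 0, 6, 5, 0, 0, 0, 0, 0],
   [0, 0, 0, 0, 0, 6, 0, 0, 0, 0, 0],
   [0, 0, 0, 0, 0, 0, 5, 0, 0, 0, 0],
   [0, 0, 0, 0, 0, 0, 6, 6, 0, 0, 0],
   [0, 0, 0, 0, 0, 0, 6, 0, 0, 0, 0],
   [0, 0, 0, 0, 0, 0, 0, 0, 0, 0, 0]]

def S6 : List (List ℕ) := [[1, 2, 2, 1, 0, 6, 0, 0, 0, 0, 0],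
   [2, 3, 2, 2, 0, 5, 0, 0, 0, 0, 6],
   [2, 1, 1, 4, 2, 7, 3, 0, 0, 6, 0],
   [1, 1, 2, 1, 0, 4, 6, 6, 0, 6, 0],
   [0, 0, 1, 1, 6, 5, 0, 0, 6, 0, 0],
   [0, 0, 0, 0, 6, 5, 0, 0, 0, 0, 0],
   [0, 0, 0, 0, 0, 6, 0, 0, 0, 0, 0],
   [0, 0, 0, 0, 0, 0, 5, 0, 0, 0, 0],
   [0, 0, 0, 0, 0, 0, 6, 6, 0, 0, 0],
   [0, 0, 0, 0, 0, 0, 6, 0, 0, 0, 0],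
   [0, 0, 0, 0, 0, 0, 0, 0, 0, 0, 0]]

def S7 : List (List ℕ) := [[1, 2, 2, 1, 0, 6, 0, 0, 0, 0, 0],
   [2, 3, 2, 2, 1, 6, 1, 0, 0, 0, 6],
   [2, 1, 1, 4, 3, 0, 4, 0, 0, 6, 0],
   [1, 1, 2, 1, 1, 4, 7, 6, 0, 6, 0],
   [0, 0, 1, 1, 6, 5, 0, 0, 6, 0, 0],
   [0, 0, 0, 0, 6, 5, 0, 0, 0, 0, 0],
   [0, 0, 0, 0, 0, 6, 0, 0, 0, 0, 0],
   [0, 0, 0, 0, 0, 0, 5, 0, 0, 0, 0],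
   [0, 0, 0, 0, 0, 0, 6, 6, 0, 0, 0],
   [0, 0, 0, 0, 0, 0, 6, 0, 0, 0, 0],
   [0, 0, 0, 0, 0, 0, 0, 0, 0, 0, 0]]

def S8 : List (List ℕ) := [[1, 2, 2, 1, 0, 6, 0, 0, 0, 0, 0],
   [2, 3, 2, 2, 1, 6, 1, 0, 0, 0, 6],
   [2, 1, 1, 4, 3, 1, 5, 1, 0, 6, 0],
   [1, 1, 2, 1, 1, 5, 0, 7, 0, 6, 0],
   [0, 0, 1, 1, 6, 6, 0, 1, 6, 0, 0],
   [0, 0, 0, 0, 6, 5, 0, 0, 0, 0, 0],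
   [0, 0, 0, 0, 0, 6, 0, 0, 0, 0, 0],
   [0, 0, 0, 0, 0, 0, 5, 0, 0, 0, 0],
   [0, 0, 0, 0, 0, 0, 6, 6, 0, 0, 0],
   [0, 0, 0, 0, 0, 0, 6, 0, 0, 0, 0],
   [0, 0, 0, 0, 0, 0, 0, 0, 0, 0, 0]]

def S9 : List (List ℕ) := [[1, 2, 2, 1, 0, 6, 0, 0, 0, 0, 0],
   [2, 3, 2, 2, 1, 6, 1, 0, 0, 0, 6],
   [2, 1, 1, 4, 3, 1, 6, 2, 1, 6, 0],
   [1, 1, 2, 1, 1, 5, 1, 0, 1, 6, 0],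
   [0, 0, 1, 1, 6, 6, 1, 1, 7, 0, 0],
   [0, 0, 0, 0, 6, 5, 0, 0, 0, 0, 0],
   [0, 0, 0, 0, 0, 6, 0, 0, 0, 0, 0],
   [0, 0, 0, 0, 0, 0, 5, 0, 0, 0, 0],
   [0, 0, 0, 0, 0, 0, 6, 6, 0, 0, 0],
   [0, 0, 0, 0, 0, 0, 6, 0, 0, 0, 0],
   [0, 0, 0, 0, 0, 0, 0, 0, 0, 0, 0]]

def S10 : List (List ℕ) := [[1, 2, 2, 1, 0, 6, 0, 0, 0, 0, 0],
   [2, 3, 2, 2, 1, 6, 1, 0, 0, 0, 6],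
   [2, 1, 1, 4, 3, 1, 6, 2, 1, 6, 0],
   [1, 1, 2, 1, 1, 5, 1, 1, 2, 7, 0],
   [0, 0, 1, 1, 6, 6, 1, 2, 0, 1, 0],
   [0, 0, 0, 0, 6, 5, 0, 1, 0, 1, 0],
   [0, 0, 0, 0, 0, 6, 0, 0, 0, 0, 0],
   [0, 0, 0, 0, 0, 0, 5, 0, 0, 0, 0],
   [0, 0, 0, 0, 0, 0, 6, 6, 0, 0, 0],
   [0, 0, 0, 0, 0, 0, 6, 0, 0, 0, 0],
   [0, 0, 0, 0, 0, 0, 0, 0, 0, 0, 0]]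

def S11 : List (List ℕ) := [[1, 2, 2, 1, 0, 6, 0, 0, 0, 0, 0],
   [2, 3, 2, 2, 1, 6, 1, 0, 0, 0, 6],
   [2, 1, 1, 4, 3, 1, 6, 2, 2, 7, 1],
   [1, 1, 2, 1, 1, 5, 1, 1, 3, 0, 1],
   [0, 0, 1, 1, 6, 6, 1, 2, 1, 1, 1],
   [0, 0, 0, 0, 6, 5, 0, 1, 0, 1, 0],
   [0, 0, 0, 0, 0, 6, 0, 0, 0, 0, 0],
   [0, 0, 0, 0, 0, 0, 5, 0, 0, 0, 0],
   [0, 0, 0, 0, 0, 0, 6, 6, 0, 0, 0],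
   [0, 0, 0, 0, 0, 0, 6, 0, 0, 0, 0],
   [0, 0, 0, 0, 0, 0, 0, 0, 0, 0, 0]]

def S12 : List (List ℕ) := [[1, 2, 2, 1, 0, 6, 0, 0, 0, 0, 0],
   [2, 3, 2, 2, 1, 6, 1, 0, 1, 1, 7],
   [2, 1, 1, 4, 3, 1, 6, 2, 3, 0, 2],
   [1, 1, 2, 1, 1, 5, 1, 1, 4, 0, 2],
   [0, 0, 1, 1, 6, 6, 1, 2, 1, 1, 1],
   [0, 0, 0, 0, 6, 5, 0, 1, 0, 1, 0],
   [0, 0, 0, 0, 0, 6, 0, 0, 0, 0, 0],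
   [0, 0, 0, 0, 0, 0, 5, 0, 0, 0, 0],
   [0, 0, 0, 0, 0, 0, 6, 6, 0, 0, 0],
   [0, 0, 0, 0, 0, 0, 6, 0, 0, 0, 0],
   [0, 0, 0, 0, 0, 0, 0, 0, 0, 0, 0]]

set_option maxRecDepth 100000

lemma stepR1 : F N127 (tbl R0) = tbl R1 := step_tbl _ _ (by decide)

lemma stepR2 : F N127 (tbl R1) = tbl R2 := step_tbl _ _ (by decide)

lemma stepR3 : F N127 (tbl R2) = tbl R3 := step_tbl _ _ (by decide)

lemma stepR4 : F N127 (tbl R3) = tbl R4 := step_tbl _ _ (by decide)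

lemma stepR5 : F N127 (tbl R4) = tbl R5 := step_tbl _ _ (by decide)

lemma stepR6 : F N127 (tbl R5) = tbl R6 := step_tbl _ _ (by decide)

lemma stepR7 : F N127 (tbl R6) = tbl R7 := step_tbl _ _ (by decide)

lemma stepR8 : F N127 (tbl R7) = tbl R8 := step_tbl _ _ (by decide)

lemma stepR9 : F N127 (tbl R8) = tbl R9 := step_tbl _ _ (by decide)

lemma stepR10 : F N127 (tbl R9) = tbl R10 := step_tbl _ _ (by decide)

lemma stepR11 : F N127 (tbl R10) = tbl R11 := step_tbl _ _ (by decide)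

lemma stepR12 : F N127 (tbl R11) = tbl R12 := step_tbl _ _ (by decide)

lemma stepS1 : F N127 (tbl S0) = tbl S1 := step_tbl _ _ (by decide)

lemma stepS2 : F N127 (tbl S1) = tbl S2 := step_tbl _ _ (by decide)

lemma stepS3 : F N127 (tbl S2) = tbl S3 := step_tbl _ _ (by decide)

lemma stepS4 : F N127 (tbl S3) = tbl S4 := step_tbl _ _ (by decide)

lemma stepS5 : F N127 (tbl S4) = tbl S5 := step_tbl _ _ (by decide)

lemma stepS6 : F N127 (tbl S5) = tbl S6 := step_tbl _ _ (by decide)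

lemma stepS7 : F N127 (tbl S6) = tbl S7 := step_tbl _ _ (by decide)

lemma stepS8 : F N127 (tbl S7) = tbl S8 := step_tbl _ _ (by decide)

lemma stepS9 : F N127 (tbl S8) = tbl S9 := step_tbl _ _ (by decide)

lemma stepS10 : F N127 (tbl S9) = tbl S10 := step_tbl _ _ (by decide)

lemma stepS11 : F N127 (tbl S10) = tbl S11 := step_tbl _ _ (by decide)

lemma stepS12 : F N127 (tbl S11) = tbl S12 := step_tbl _ _ (by decide)

lemma quietWE0 : ∀ q ∈ WEfin, tbl R0 q < θ N127 := by decide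

lemma quietWE1 : ∀ q ∈ WEfin, tbl R1 q < θ N127 := by decide

lemma quietWE2 : ∀ q ∈ WEfin, tbl R2 q < θ N127 := by decide

lemma quietWE3 : ∀ q ∈ WEfin, tbl R3 q < θ N127 := by decide

lemma quietWE4 : ∀ q ∈ WEfin, tbl R4 q < θ N127 := by decide

lemma quietWE5 : ∀ q ∈ WEfin, tbl R5 q < θ N127 := by decide

lemma quietWE6 : ∀ q ∈ WEfin, tbl R6 q < θ N127 := by decide

lemma quietWE7 : ∀ q ∈ WEfin, tbl R7 q < θ N127 := by decide

lemma quietWE8 : ∀ q ∈ WEfin, tbl R8 q < θ N127 := by decide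

lemma quietWE9 : ∀ q ∈ WEfin, tbl R9 q < θ N127 := by decide

lemma quietWE10 : ∀ q ∈ WEfin, tbl R10 q < θ N127 := by decide

lemma quietWE11 : ∀ q ∈ WEfin, tbl R11 q < θ N127 := by decide

lemma quietWE12 : ∀ q ∈ WEfin, tbl R12 q < θ N127 := by decide

lemma quietNS0 : ∀ q ∈ NSfin, tbl S0 q < θ N127 := by decide

lemma quietNS1 : ∀ q ∈ NSfin, tbl S1 q < θ N127 := by decide

lemma quietNS2 : ∀ q ∈ NSfin, tbl S2 q < θ N127 := by decide

lemma quietNS3 : ∀ q ∈ NSfin, tbl S3 q < θ N127 := by decide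

lemma quietNS4 : ∀ q ∈ NSfin, tbl S4 q < θ N127 := by decide

lemma quietNS5 : ∀ q ∈ NSfin, tbl S5 q < θ N127 := by decide

lemma quietNS6 : ∀ q ∈ NSfin, tbl S6 q < θ N127 := by decide

lemma quietNS7 : ∀ q ∈ NSfin, tbl S7 q < θ N127 := by decide

lemma quietNS8 : ∀ q ∈ NSfin, tbl S8 q < θ N127 := by decide

lemma quietNS9 : ∀ q ∈ NSfin, tbl S9 q < θ N127 := by decide

lemma quietNS10 : ∀ q ∈ NSfin, tbl S10 q < θ N127 := by decide

lemma quietNS11 : ∀ q ∈ NSfin, tbl S11 q < θ N127 := by decide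

lemma quietNS12 : ∀ q ∈ NSfin, tbl S12 q < θ N127 := by decide

lemma iR0 : (F N127)^[0] (tbl R0) = tbl R0 := Function.iterate_zero_apply _ _

lemma iR1 : (F N127)^[1] (tbl R0) = tbl R1 := by
  rw [show (1:ℕ) = 0+1 from rfl, Function.iterate_succ_apply', iR0, stepR1]

lemma iR2 : (F N127)^[2] (tbl R0) = tbl R2 := by
  rw [show (2:ℕ) = 1+1 from rfl, Function.iterate_succ_apply', iR1, stepR2]

lemma iR3 : (F N127)^[3] (tbl R0) = tbl R3 := by
  rw [show (3:ℕ) = 2+1 from rfl, Function.iterate_succ_apply', iR2, stepR3]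

lemma iR4 : (F N127)^[4] (tbl R0) = tbl R4 := by
  rw [show (4:ℕ) = 3+1 from rfl, Function.iterate_succ_apply', iR3, stepR4]

lemma iR5 : (F N127)^[5] (tbl R0) = tbl R5 := by
  rw [show (5:ℕ) = 4+1 from rfl, Function.iterate_succ_apply', iR4, stepR5]

lemma iR6 : (F N127)^[6] (tbl R0) = tbl R6 := by
  rw [show (6:ℕ) = 5+1 from rfl, Function.iterate_succ_apply', iR5, stepR6]

lemma iR7 : (F N127)^[7] (tbl R0) = tbl R7 := by
  rw [show (7:ℕ) = 6+1 from rfl, Function.iterate_succ_apply', iR6, stepR7]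

lemma iR8 : (F N127)^[8] (tbl R0) = tbl R8 := by
  rw [show (8:ℕ) = 7+1 from rfl, Function.iterate_succ_apply', iR7, stepR8]

lemma iR9 : (F N127)^[9] (tbl R0) = tbl R9 := by
  rw [show (9:ℕ) = 8+1 from rfl, Function.iterate_succ_apply', iR8, stepR9]

lemma iR10 : (F N127)^[10] (tbl R0) = tbl R10 := by
  rw [show (10:ℕ) = 9+1 from rfl, Function.iterate_succ_apply', iR9, stepR10]

lemma iR11 : (F N127)^[11] (tbl R0) = tbl R11 := by
  rw [show (11:ℕ) = 10+1 from rfl, Function.iterate_succ_apply', iR10, stepR11]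

lemma iR12 : (F N127)^[12] (tbl R0) = tbl R12 := by
  rw [show (12:ℕ) = 11+1 from rfl, Function.iterate_succ_apply', iR11, stepR12]

lemma iS0 : (F N127)^[0] (tbl S0) = tbl S0 := Function.iterate_zero_apply _ _

lemma iS1 : (F N127)^[1] (tbl S0) = tbl S1 := by
  rw [show (1:ℕ) = 0+1 from rfl, Function.iterate_succ_apply', iS0, stepS1]

lemma iS2 : (F N127)^[2] (tbl S0) = tbl S2 := by
  rw [show (2:ℕ) = 1+1 from rfl, Function.iterate_succ_apply', iS1, stepS2]

lemma iS3 : (F N127)^[3] (tbl S0) = tbl S3 := by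
  rw [show (3:ℕ) = 2+1 from rfl, Function.iterate_succ_apply', iS2, stepS3]

lemma iS4 : (F N127)^[4] (tbl S0) = tbl S4 := by
  rw [show (4:ℕ) = 3+1 from rfl, Function.iterate_succ_apply', iS3, stepS4]

lemma iS5 : (F N127)^[5] (tbl S0) = tbl S5 := by
  rw [show (5:ℕ) = 4+1 from rfl, Function.iterate_succ_apply', iS4, stepS5]

lemma iS6 : (F N127)^[6] (tbl S0) = tbl S6 := by
  rw [show (6:ℕ) = 5+1 from rfl, Function.iterate_succ_apply', iS5, stepS6]

lemma iS7 : (F N127)^[7] (tbl S0) = tbl S7 := by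
  rw [show (7:ℕ) = 6+1 from rfl, Function.iterate_succ_apply', iS6, stepS7]

lemma iS8 : (F N127)^[8] (tbl S0) = tbl S8 := by
  rw [show (8:ℕ) = 7+1 from rfl, Function.iterate_succ_apply', iS7, stepS8]

lemma iS9 : (F N127)^[9] (tbl S0) = tbl S9 := by
  rw [show (9:ℕ) = 8+1 from rfl, Function.iterate_succ_apply', iS8, stepS9]

lemma iS10 : (F N127)^[10] (tbl S0) = tbl S10 := by
  rw [show (10:ℕ) = 9+1 from rfl, Function.iterate_succ_apply', iS9, stepS10]

lemma iS11 : (F N127)^[11] (tbl S0) = tbl S11 := by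
  rw [show (11:ℕ) = 10+1 from rfl, Function.iterate_succ_apply', iS10, stepS11]

lemma iS12 : (F N127)^[12] (tbl S0) = tbl S12 := by
  rw [show (12:ℕ) = 11+1 from rfl, Function.iterate_succ_apply', iS11, stepS12]

lemma hcR : tbl gT + one (5,9) = tbl R0 := by
  funext p
  show tbl gT p + one (5,9) p = tbl R0 p
  by_cases h1 : -2 ≤ p.1 ∧ p.1 ≤ 10 ∧ -1 ≤ p.2 ∧ p.2 ≤ 11
  · exact (by decide : ∀ q ∈ B2, tbl gT q + one (5,9) q = tbl R0 q) p
      (Finset.mem_product.mpr ⟨Finset.mem_Icc.mpr ⟨h1.1, h1.2.1⟩,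
        Finset.mem_Icc.mpr ⟨h1.2.2.1, h1.2.2.2⟩⟩)
  · rw [tbl_outside gT p (by omega), tbl_outside R0 p (by omega)]
    have : p ≠ (5,9) := by
      rintro rfl; simp at h1
    simp [one, this]

lemma hcS : tbl gT + one (0,1) = tbl S0 := by
  funext p
  show tbl gT p + one (0,1) p = tbl S0 p
  by_cases h1 : -2 ≤ p.1 ∧ p.1 ≤ 10 ∧ -1 ≤ p.2 ∧ p.2 ≤ 11
  · exact (by decide : ∀ q ∈ B2, tbl gT q + one (0,1) q = tbl S0 q) p
      (Finset.mem_product.mpr ⟨Finset.mem_Icc.mpr ⟨h1.1, h1.2.1⟩,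
        Finset.mem_Icc.mpr ⟨h1.2.2.1, h1.2.2.2⟩⟩)
  · rw [tbl_outside gT p (by omega), tbl_outside S0 p (by omega)]
    have : p ≠ (0,1) := by
      rintro rfl; simp at h1
    simp [one, this]

lemma gstable : Stable N127 (tbl gT) := by
  intro p
  rw [θN]
  by_cases h1 : -2 ≤ p.1 ∧ p.1 ≤ 10 ∧ -1 ≤ p.2 ∧ p.2 ≤ 11
  · exact (by decide : ∀ q ∈ B2, tbl gT q < 7) p
      (Finset.mem_product.mpr ⟨Finset.mem_Icc.mpr ⟨h1.1, h1.2.1⟩,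
        Finset.mem_Icc.mpr ⟨h1.2.2.1, h1.2.2.2⟩⟩)
  · rw [tbl_outside gT p (by omega)]; norm_num

lemma gsupp : ∀ p : Cell, p ∉ Rect 10 10 → tbl gT p = 0 := by
  intro p hp
  by_cases h1 : -2 ≤ p.1 ∧ p.1 ≤ 10 ∧ -1 ≤ p.2 ∧ p.2 ≤ 11
  · have hd : p.1 < 0 ∨ 10 ≤ p.1 ∨ p.2 < 0 ∨ 10 ≤ p.2 := by
      by_contra hcon
      push_neg at hcon
      exact hp ⟨by omega, by norm_num; omega, by omega, by norm_num; omega⟩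
    exact (by decide : ∀ q ∈ B2, (q.1 < 0 ∨ 10 ≤ q.1 ∨ q.2 < 0 ∨ 10 ≤ q.2) → tbl gT q = 0) p
      (Finset.mem_product.mpr ⟨Finset.mem_Icc.mpr ⟨h1.1, h1.2.1⟩,
        Finset.mem_Icc.mpr ⟨h1.2.2.1, h1.2.2.2⟩⟩) hd
  · exact tbl_outside gT p (by omega)

theorem nbhd127_timed_crossover :
    ∃ g n e s w, IsTimedCrossoverGate
      ({(1,0),(0,-1),(-1,0),(-1,1),(1,1),(1,-1),(-1,-1)} : Finset Cell) 10 10 12 g n e s w := by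
  refine ⟨tbl gT, (5,9), (9,1), (4,0), (0,1), gstable, gsupp,
    ?_, ?_, ?_, ?_, ?_, ?_, ?_, ?_, 3, 2, 1, 0, ?_, ?_, ?_, ?_, by decide, by decide, by decide,
    ?_, ?_, ?_, ?_⟩
  · exact ⟨by norm_num, by norm_num, by norm_num, by norm_num⟩
  · exact ⟨by norm_num, by norm_num, by norm_num, by norm_num⟩
  · exact ⟨by norm_num, by norm_num, by norm_num, by norm_num⟩
  · exact ⟨by norm_num, by norm_num, by norm_num, by norm_num⟩
  · norm_num [Corners, Set.mem_insert_iff, Set.mem_singleton_iff, Prod.ext_iff]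
  · norm_num [Corners, Set.mem_insert_iff, Set.mem_singleton_iff, Prod.ext_iff]
  · norm_num [Corners, Set.mem_insert_iff, Set.mem_singleton_iff, Prod.ext_iff]
  · norm_num [Corners, Set.mem_insert_iff, Set.mem_singleton_iff, Prod.ext_iff]
  · rw [side, if_neg (by decide), if_neg (by decide), if_neg (by decide)]
    exact ⟨by norm_num, by norm_num, by norm_num⟩
  · rw [side, if_neg (by decide), if_neg (by decide), if_pos rfl]
    exact ⟨by norm_num, by norm_num, by norm_num⟩
  · rw [side, if_neg (by decide), if_pos rfl]
    exact ⟨by norm_num, by norm_num, by norm_num⟩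
  · rw [side, if_pos rfl]
    exact ⟨by norm_num, by norm_num, by norm_num⟩
  · show θ N127 ≤ (F N127)^[12] (tbl gT + one (5,9)) (4,0)
    rw [hcR, iR12, θN]
    decide
  · show ∀ p ∈ side 10 10 0 ∪ side 10 10 2, ∀ t ≤ 12,
      (F N127)^[t] (tbl gT + one (5,9)) p < θ N127
    intro p hp t ht
    have hp' := memWE hp
    rw [hcR]
    interval_cases t
    · rw [iR0]; exact quietWE0 p hp'
    · rw [iR1]; exact quietWE1 p hp'
    · rw [iR2]; exact quietWE2 p hp'
    · rw [iR3]; exact quietWE3 p hp'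
    · rw [iR4]; exact quietWE4 p hp'
    · rw [iR5]; exact quietWE5 p hp'
    · rw [iR6]; exact quietWE6 p hp'
    · rw [iR7]; exact quietWE7 p hp'
    · rw [iR8]; exact quietWE8 p hp'
    · rw [iR9]; exact quietWE9 p hp'
    · rw [iR10]; exact quietWE10 p hp'
    · rw [iR11]; exact quietWE11 p hp'
    · rw [iR12]; exact quietWE12 p hp'
  · show θ N127 ≤ (F N127)^[12] (tbl gT + one (0,1)) (9,1)
    rw [hcS, iS12, θN]
    decide
  · show ∀ p ∈ side 10 10 3 ∪ side 10 10 1, ∀ t ≤ 12,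
      (F N127)^[t] (tbl gT + one (0,1)) p < θ N127
    intro p hp t ht
    have hp' := memNS hp
    rw [hcS]
    interval_cases t
    · rw [iS0]; exact quietNS0 p hp'
    · rw [iS1]; exact quietNS1 p hp'
    · rw [iS2]; exact quietNS2 p hp'
    · rw [iS3]; exact quietNS3 p hp'
    · rw [iS4]; exact quietNS4 p hp'
    · rw [iS5]; exact quietNS5 p hp'
    · rw [iS6]; exact quietNS6 p hp'
    · rw [iS7]; exact quietNS7 p hp'
    · rw [iS8]; exact quietNS8 p hp'
    · rw [iS9]; exact quietNS9 p hp'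
    · rw [iS10]; exact quietNS10 p hp'
    · rw [iS11]; exact quietNS11 p hp'
    · rw [iS12]; exact quietNS12 p hp'

end Sandpile
end
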